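/- arXiv:2405.09242 — 3 statements merged into one kernel-verified Lean document; each statement's English description precedes it below -/
import Mathlib

section
/- For each permutation w ∈ S_n, the hop equivalence class Hop(w) under valley hopping satisfies Σ_{u ∈ Hop(w)} t^{des(u)} = t^{pk(w)} (1+t)^{n-1-2·pk(w)}, where pk(w) is the number of peaks of w. -/
open Finset Polynomial

open scoped Classical

noncomputable section

/-- The letter (0-based) at 0-based position `i` in the one-line notation of `w`
(junk value `0` out of range). -/
def ol (n : ℕ) (w : Equiv.Perm (Fin n)) (i : ℕ) : ℕ :=
  if h : i < n then (w ⟨i, h⟩ : ℕ) else 0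

/-- The descent set of `w`, with 0-based positions: `i ∈ DesSet n w` (for `i ≤ n-2`)
means `w(i) > w(i+1)`.  (This is the paper's descent `i+1 ∈ [n-1]`.) -/
def DesSet (n : ℕ) (w : Equiv.Perm (Fin n)) : Finset ℕ :=
  (Finset.range (n - 1)).filter fun i => ol n w (i + 1) < ol n w i

/-- The number of descents of `w`. -/
def des (n : ℕ) (w : Equiv.Perm (Fin n)) : ℕ := (DesSet n w).card

/-- `w` has no double descent: no two consecutive descent positions. -/
def NoDoubleDescent (n : ℕ) (w : Equiv.Perm (Fin n)) : Prop :=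
  ∀ i ∈ DesSet n w, i + 1 ∉ DesSet n w

/-- `w` has no initial descent (no descent at the first position). -/
def NoInitialDescent (n : ℕ) (w : Equiv.Perm (Fin n)) : Prop := 0 ∉ DesSet n w

/-- `w` has no final descent (no descent at the last position, paper's `n-1`). -/
def NoFinalDescent (n : ℕ) (w : Equiv.Perm (Fin n)) : Prop := n - 2 ∉ DesSet n w

/-- The involution `w ↦ w*`, `w*(i) = n+1-w(n+1-i)` in 1-based notation. -/
def starPerm (n : ℕ) (w : Equiv.Perm (Fin n)) : Equiv.Perm (Fin n) :=
  (Fin.revPerm.trans w).trans Fin.revPerm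

/-- The letter at 1-based position `i ∈ [1,n]` of `w`, as an element of `ℕ∞`,
with the boundary convention `w(0) = w(n+1) = ⊤`. -/
def olb (n : ℕ) (w : Equiv.Perm (Fin n)) (i : ℕ) : ℕ∞ :=
  if h : 1 ≤ i ∧ i ≤ n then ((w ⟨i - 1, by omega⟩ : ℕ) : ℕ∞) else ⊤

/-- 1-based position `i` is a peak of `w` : `w(i-1) < w(i) > w(i+1)` (boundaries `⊤`,
so positions `1` and `n` are never peaks). -/
def IsPeak (n : ℕ) (w : Equiv.Perm (Fin n)) (i : ℕ) : Prop :=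
  olb n w (i - 1) < olb n w i ∧ olb n w (i + 1) < olb n w i

/-- 1-based position `i` is a valley of `w` : `w(i-1) > w(i) < w(i+1)`. -/
def IsValley (n : ℕ) (w : Equiv.Perm (Fin n)) (i : ℕ) : Prop :=
  olb n w i < olb n w (i - 1) ∧ olb n w i < olb n w (i + 1)

/-- 1-based position `i` holds a free letter of `w` : neither a peak nor a valley. -/
def IsFree (n : ℕ) (w : Equiv.Perm (Fin n)) (i : ℕ) : Prop :=
  ¬ IsPeak n w i ∧ ¬ IsValley n w i

/-- The number of peaks of `w`. -/
def pk (n : ℕ) (w : Equiv.Perm (Fin n)) : ℕ :=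
  ((Finset.Icc 1 n).filter (IsPeak n w)).card

/-- The number of inversions of `w`, i.e. its Coxeter length. -/
def invNum (n : ℕ) (w : Equiv.Perm (Fin n)) : ℕ :=
  (Finset.univ.filter fun p : Fin n × Fin n => p.1 < p.2 ∧ w p.2 < w p.1).card

/-- The standard parabolic subgroup `W_K` of `S_n` generated by the adjacent
transpositions `(k, k+1)` (1-based letters `k ∈ K`, i.e. 0-based `k-1`, `k`). -/
def WK (n : ℕ) (K : Finset ℕ) : Subgroup (Equiv.Perm (Fin n)) :=
  Subgroup.closure { s | ∃ k ∈ K, ∃ hk : k < n,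
    s = Equiv.swap (⟨k - 1, lt_of_le_of_lt (Nat.sub_le k 1) hk⟩ : Fin n) ⟨k, hk⟩ }

/-- The set `W^K` of permutations in which, for every `k ∈ K`, the letter `k`
appears before the letter `k+1` (1-based letters; these are the minimal-length
coset representatives of `W_K`). -/
def WKreps (n : ℕ) (K : Finset ℕ) : Finset (Equiv.Perm (Fin n)) :=
  Finset.univ.filter fun w => ∀ k ∈ K, ∀ hk : k < n,
    w⁻¹ (⟨k - 1, lt_of_le_of_lt (Nat.sub_le k 1) hk⟩ : Fin n) < w⁻¹ ⟨k, hk⟩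

/-- The set `W(K) = { v ∈ S_n : v⁻¹(k) − v⁻¹(k+1) ≤ 1 for all k ∈ K }`
(1-based letters `k`, `k+1`). -/
def Wset (n : ℕ) (K : Finset ℕ) : Finset (Equiv.Perm (Fin n)) :=
  Finset.univ.filter fun v => ∀ k ∈ K, ∀ hk : k < n,
    ((v⁻¹ (⟨k - 1, lt_of_le_of_lt (Nat.sub_le k 1) hk⟩ : Fin n) : Fin n) : ℕ) ≤
      ((v⁻¹ (⟨k, hk⟩ : Fin n) : Fin n) : ℕ) + 1

/-- The orbit of `i` under the action of `W_K` on positions/letters. -/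
def orbitFinset (n : ℕ) (K : Finset ℕ) (i : Fin n) : Finset (Fin n) :=
  Finset.univ.filter fun j => ∃ u ∈ WK n K, u i = j

/-- The set of orbits of `W_K` on `[n]`. -/
def orbitsFinset (n : ℕ) (K : Finset ℕ) : Finset (Finset (Fin n)) :=
  Finset.univ.image (orbitFinset n K)

/-- The one-line notation of `w` as a list of (0-based) letters. -/
def word (n : ℕ) (w : Equiv.Perm (Fin n)) : List ℕ := List.ofFn fun i => (w i : ℕ)

/-- A single valley hop of the free letter `j` from a downslope (in `v`) to the
nearest upslope of the same height (giving `u`): `j` moves rightwards directly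
across the adjacent valley `B`. -/
def hopStep (v u : List ℕ) : Prop :=
  ∃ (A B C : List ℕ) (j : ℕ), B ≠ [] ∧ (∀ x ∈ B, x < j) ∧
    (∀ x ∈ A.getLast?, j < x) ∧ (∀ x ∈ C.head?, j < x) ∧
    v = A ++ j :: (B ++ C) ∧ u = A ++ (B ++ j :: C)

/-- Hop equivalence (valley hopping) on `S_n`: the equivalence closure of single
hops of free letters. -/
def hopEquiv (n : ℕ) (a b : Equiv.Perm (Fin n)) : Prop :=
  Relation.EqvGen (fun x y : Equiv.Perm (Fin n) => hopStep (word n x) (word n y)) a b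

/-- The index (1-based) of the `W_K`-orbit containing the letter `x ∈ [1,n]`:
orbits are consecutive intervals, numbered from the left. -/
def orbIdx (K : Finset ℕ) (x : ℕ) : ℕ :=
  1 + ((Finset.Icc 1 (x - 1)).filter fun t => t ∉ K).card

/-- The (0-based) descent set of a word `v` of length `n`. -/
def wdes (n : ℕ) (v : Fin n → ℕ) : Finset ℕ :=
  (Finset.range (n - 1)).filter fun i =>
    if h : i + 1 < n then v ⟨i + 1, h⟩ < v ⟨i, by omega⟩ else False

/-- The word `v` has content `μ(K)`: for each `i`, the number of letters of `v`
equal to `i` is the size of the `i`-th orbit of `W_K` on `[1,n]`. -/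
def HasContent (n : ℕ) (K : Finset ℕ) (v : Fin n → ℕ) : Prop :=
  ∀ i : ℕ, (Finset.univ.filter fun j => v j = i).card =
    ((Finset.Icc 1 n).filter fun x => orbIdx K x = i).card

/-- `w` is the standardization `φ(v)` of the word `v`: `w` orders positions by
letter value, breaking ties from left to right.  (This is exactly the map `φ`
of the paper: if `j` is the `k`-th smallest position with `v(j) = i`, then
`φ(v)(j) = k + μ₁ + ⋯ + μ_{i-1}`.) -/
def IsStd (n : ℕ) (v : Fin n → ℕ) (w : Equiv.Perm (Fin n)) : Prop :=
  ∀ j j' : Fin n, w j < w j' ↔ (v j < v j' ∨ (v j = v j' ∧ j < j'))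

section ListLevel
open List

/-- number of descents of a list -/
def ldesL : List ℕ → ℕ
  | a :: b :: t => (if b < a then 1 else 0) + ldesL (b :: t)
  | _ => 0

/-- number of (interior) peaks of a list -/
def lpkL : List ℕ → ℕ
  | a :: b :: c :: t => (if a < b ∧ c < b then 1 else 0) + lpkL (b :: c :: t)
  | _ => 0

lemma ldesL_cons (a : ℕ) (L : List ℕ) :
    ldesL (a :: L) = (if L.headD a < a then 1 else 0) + ldesL L := by
  cases L with
  | nil => simp [ldesL]
  | cons b t => simp [ldesL]

lemma lpkL_cons₂ (a b : ℕ) (L : List ℕ) :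
    lpkL (a :: b :: L) = (if a < b ∧ L.headD b < b then 1 else 0) + lpkL (b :: L) := by
  cases L with
  | nil => simp [lpkL]
  | cons c t => simp [lpkL]

lemma headD_append_pair (A : List ℕ) (a b d : ℕ) (B : List ℕ) :
    (A ++ a :: b :: B).headD d = (A ++ [a, b]).headD d := by
  cases A <;> simp

lemma headD_append_single (A : List ℕ) (a d : ℕ) (B : List ℕ) :
    (A ++ a :: B).headD d = (A ++ [a]).headD d := by
  cases A <;> simp

/-- splitting descents at an overlap letter -/
lemma ldesL_split (x : ℕ) : ∀ (A B : List ℕ),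
    ldesL (A ++ x :: B) = ldesL (A ++ [x]) + ldesL (x :: B)
  | [], B => by simp [ldesL]
  | y :: A', B => by
    rw [cons_append, ldesL_cons, cons_append, ldesL_cons,
      headD_append_single A' x y B, ldesL_split x A' B]
    ring

/-- splitting peaks at an overlap window of two letters -/
lemma lpkL_split (a b : ℕ) : ∀ (A B : List ℕ),
    lpkL (A ++ a :: b :: B) = lpkL (A ++ [a, b]) + lpkL (a :: b :: B)
  | [], B => by simp [lpkL]
  | [x], B => by
    simp only [cons_append, nil_append, lpkL_cons₂]
    simp [lpkL]
  | x :: y :: A', B => by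
    rw [cons_append, cons_append, lpkL_cons₂, cons_append, cons_append, lpkL_cons₂,
      headD_append_pair A' a b y B]
    have := lpkL_split a b (y :: A') B
    rw [cons_append] at this
    rw [this]
    simp only [cons_append]
    ring

lemma ldesL_cons_max {m : ℕ} {Q : List ℕ} (hQ : ∀ x ∈ Q, x < m) :
    ldesL (m :: Q) = (if Q = [] then 0 else 1) + ldesL Q := by
  rw [ldesL_cons]
  cases Q with
  | nil => simp
  | cons b t => simp [hQ b (by simp)]

lemma ldesL_append_max {m : ℕ} : ∀ {P : List ℕ}, (∀ x ∈ P, x < m) →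
    ldesL (P ++ [m]) = ldesL P
  | [], _ => by simp [ldesL]
  | [a], h => by
    have := h a (by simp); simp [ldesL, Nat.not_lt.2 this.le]
  | a :: b :: P', h => by
    have ih := ldesL_append_max (P := b :: P') (fun x hx => h x (mem_cons_of_mem a hx))
    rw [cons_append] at ih
    rw [cons_append, ldesL_cons, cons_append, headD_cons, ih]
    simp [ldesL_cons]

lemma lpkL_cons_max {m : ℕ} {Q : List ℕ} (hQ : ∀ x ∈ Q, x < m) :
    lpkL (m :: Q) = lpkL Q := by
  cases Q with
  | nil => simp [lpkL]
  | cons b t =>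
    rw [lpkL_cons₂]
    have : ¬ (m < b) := Nat.not_lt.2 (hQ b (by simp)).le
    simp [this]

lemma lpkL_append_max {m : ℕ} : ∀ {P : List ℕ}, (∀ x ∈ P, x < m) →
    lpkL (P ++ [m]) = lpkL P
  | [], _ => by simp [lpkL]
  | [a], _ => by simp [lpkL]
  | a :: b :: P', h => by
    rw [cons_append, cons_append, lpkL_cons₂, ← cons_append,
      lpkL_append_max (fun x hx => h x (mem_cons_of_mem a hx)), lpkL_cons₂]
    congr 1
    cases P' with
    | nil =>
      have : ¬ (m < b) := Nat.not_lt.2 (h b (by simp)).le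
      simp [this]
    | cons c t => simp

lemma lpkL_mid {m : ℕ} {P Q : List ℕ} (hP : ∀ x ∈ P, x < m) (hQ : ∀ x ∈ Q, x < m)
    (hPne : P ≠ []) (hQne : Q ≠ []) :
    lpkL (P ++ m :: Q) = lpkL P + lpkL Q + 1 := by
  obtain ⟨A, a, rfl⟩ := P.eq_nil_or_concat.resolve_left hPne
  obtain ⟨q, Q', rfl⟩ : ∃ q Q', Q = q :: Q' := by
    cases Q with
    | nil => exact absurd rfl hQne
    | cons q Q' => exact ⟨q, Q', rfl⟩
  have ham : a < m := hP a (by simp [concat_eq_append])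
  have hqm : q < m := hQ q (by simp)
  have hA : ∀ x ∈ A ++ [a], x < m := by
    intro x hx; apply hP; simpa [concat_eq_append] using hx
  have h2 : lpkL (A ++ [a, m]) = lpkL (A ++ [a]) := by
    have : A ++ [a, m] = (A ++ [a]) ++ [m] := by simp
    rw [this, lpkL_append_max hA]
  rw [concat_eq_append, append_assoc, singleton_append, lpkL_split a m A (q :: Q'), h2,
    lpkL_cons₂ a m, lpkL_cons_max hQ, headD_cons, if_pos ⟨ham, hqm⟩]
  ring

lemma lpkL_bound : ∀ (l : List ℕ), 2 * lpkL l + 1 ≤ max 1 l.length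
  | [] => by simp [lpkL]
  | [a] => by simp [lpkL]
  | [a, b] => by simp [lpkL]
  | a :: b :: c :: t => by
    by_cases h : a < b ∧ c < b
    · have h1 : lpkL (b :: c :: t) = lpkL (c :: t) := by
        rw [lpkL_cons₂]
        have : ¬ (b < c) := Nat.not_lt.2 h.2.le
        simp [this]
      have := lpkL_bound (c :: t)
      simp only [lpkL, if_pos h, h1, length] at *
      omega
    · have := lpkL_bound (b :: c :: t)
      simp only [lpkL, if_neg h, length] at *
      omega

def hopE (v u : List ℕ) : Prop := Relation.EqvGen hopStep v u

lemma hopStep_perm {v u : List ℕ} (h : hopStep v u) : v.Perm u := by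
  obtain ⟨A, B, C, j, -, -, -, -, rfl, rfl⟩ := h
  exact (List.perm_middle.symm).append_left A

lemma hopE_perm {v u : List ℕ} (h : hopE v u) : v.Perm u := by
  induction h with
  | rel _ _ h => exact hopStep_perm h
  | refl => exact .refl _
  | symm _ _ _ ih => exact ih.symm
  | trans _ _ _ _ _ ih1 ih2 => exact ih1.trans ih2

lemma nodup_mid {m : ℕ} {A B : List ℕ} (h : (A ++ m :: B).Nodup) : m ∉ A ∧ m ∉ B := by
  rw [List.nodup_append] at h
  exact ⟨fun hm => h.2.2 m hm m (by simp) rfl, fun hm => (List.nodup_cons.1 h.2.1).1 hm⟩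

lemma eq_of_append_cons {m : ℕ} : ∀ {A C : List ℕ} {B D : List ℕ},
    A ++ m :: B = C ++ m :: D → m ∉ A → m ∉ C → A = C ∧ B = D
  | [], [], B, D, h, _, _ => by simpa using h
  | [], c :: C', B, D, h, _, hC => by
    simp only [nil_append, cons_append, cons.injEq] at h
    exact absurd (h.1 ▸ (List.mem_cons_self : c ∈ c :: C')) (by simpa [h.1] using hC)
  | a :: A', [], B, D, h, hA, _ => by
    simp only [cons_append, nil_append, cons.injEq] at h
    exact absurd (h.1 ▸ (List.mem_cons_self : a ∈ a :: A')) (by simpa [h.1] using hA)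
  | a :: A', c :: C', B, D, h, hA, hC => by
    simp only [cons_append, cons.injEq] at h
    obtain ⟨rfl, h2⟩ := h
    obtain ⟨h3, h4⟩ := eq_of_append_cons h2 (fun hm => hA (mem_cons_of_mem _ hm))
      (fun hm => hC (mem_cons_of_mem _ hm))
    exact ⟨by rw [h3], h4⟩

lemma getLast?_cons_or (m : ℕ) (A : List ℕ) :
    (m :: A).getLast? = A.getLast?.or (some m) := by
  rw [show m :: A = [m] ++ A from rfl, List.getLast?_append]; rfl

lemma getLast?_append_cons' {m : ℕ} (P A : List ℕ) :
    (P ++ m :: A).getLast? = A.getLast?.or (some m) := by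
  rw [List.getLast?_append, getLast?_cons_or]
  cases h : A.getLast? with
  | none => rfl
  | some a => rfl

lemma head?_append_cons {m : ℕ} (C Q : List ℕ) :
    (C ++ m :: Q).head? = C.head?.or (some m) := by
  rw [List.head?_append]; rfl

/-- appending `m :: Q` (with `m` bigger than everything in `v`) on the right
preserves hop steps -/
lemma hopStep_append_big {m : ℕ} {v u : List ℕ} (h : hopStep v u)
    (hv : ∀ x ∈ v, x < m) (Q : List ℕ) : hopStep (v ++ m :: Q) (u ++ m :: Q) := by
  obtain ⟨A, B, C, j, hB, hBlt, hA, hC, rfl, rfl⟩ := h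
  have hj : j < m := hv j (by simp)
  refine ⟨A, B, C ++ m :: Q, j, hB, hBlt, hA, ?_, by simp, by simp⟩
  intro x hx
  rw [head?_append_cons] at hx
  cases hC' : C.head? with
  | none => simp [hC'] at hx; omega
  | some c => simp [hC'] at hx; exact hx ▸ hC c (by simp [hC'])

/-- prepending `P ++ [m]` (with `m` bigger than everything in `v`) on the left
preserves hop steps -/
lemma hopStep_prepend_big {m : ℕ} {v u : List ℕ} (h : hopStep v u)
    (hv : ∀ x ∈ v, x < m) (P : List ℕ) : hopStep (P ++ m :: v) (P ++ m :: u) := by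
  obtain ⟨A, B, C, j, hB, hBlt, hA, hC, rfl, rfl⟩ := h
  have hj : j < m := hv j (by simp)
  refine ⟨P ++ m :: A, B, C, j, hB, hBlt, ?_, hC, by simp, by simp⟩
  intro x hx
  rw [getLast?_append_cons'] at hx
  cases hA' : A.getLast? with
  | none => simp [hA'] at hx; omega
  | some a => simp [hA'] at hx; exact hx ▸ hA a (by simp [hA'])

lemma hopE_append_big {m : ℕ} {v u : List ℕ} (Q : List ℕ) (h : hopE v u) :
    (∀ x ∈ v, x < m) → hopE (v ++ m :: Q) (u ++ m :: Q) := by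
  induction h with
  | rel a b hab => exact fun hv => .rel _ _ (hopStep_append_big hab hv Q)
  | refl a => exact fun _ => .refl _
  | symm a b hab ih =>
    intro hv
    exact .symm _ _ (ih fun x hx => hv x ((hopE_perm hab).subset hx))
  | trans a b c hab hbc ih1 ih2 =>
    intro hv
    exact .trans _ _ _ (ih1 hv) (ih2 fun x hx => hv x ((hopE_perm hab).symm.subset hx))

lemma hopE_prepend_big {m : ℕ} {v u : List ℕ} (P : List ℕ) (h : hopE v u) :
    (∀ x ∈ v, x < m) → hopE (P ++ m :: v) (P ++ m :: u) := by
  induction h with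
  | rel a b hab => exact fun hv => .rel _ _ (hopStep_prepend_big hab hv P)
  | refl a => exact fun _ => .refl _
  | symm a b hab ih =>
    intro hv
    exact .symm _ _ (ih fun x hx => hv x ((hopE_perm hab).subset hx))
  | trans a b c hab hbc ih1 ih2 =>
    intro hv
    exact .trans _ _ _ (ih1 hv) (ih2 fun x hx => hv x ((hopE_perm hab).symm.subset hx))

lemma hopE_mid_congr {m : ℕ} {P P' Q Q' : List ℕ} (hP : hopE P P') (hQ : hopE Q Q')
    (hPlt : ∀ x ∈ P, x < m) (hQlt : ∀ x ∈ Q, x < m) :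
    hopE (P ++ m :: Q) (P' ++ m :: Q') :=
  .trans _ _ _ (hopE_append_big Q hP hPlt) (hopE_prepend_big P' hQ hQlt)

lemma last_cond_inner {j m : ℕ} {A₁ A₂ : List ℕ}
    (hA : ∀ x ∈ (A₁ ++ m :: A₂).getLast?, j < x) : ∀ x ∈ A₂.getLast?, j < x := by
  intro x hx
  apply hA
  rw [getLast?_append_cons']
  cases h : A₂.getLast? with
  | none => rw [h] at hx; simp at hx
  | some a => simp [h] at hx; simp [h, hx]

lemma head_cond_inner {j m : ℕ} {C₁ C₂ : List ℕ}
    (hC : ∀ x ∈ (C₁ ++ m :: C₂).head?, j < x) : ∀ x ∈ C₁.head?, j < x := by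
  intro x hx
  apply hC
  rw [head?_append_cons]
  cases h : C₁.head? with
  | none => rw [h] at hx; simp at hx
  | some a => simp [h] at hx; simp [h, hx]

section Mid

variable {m : ℕ} {P Q : List ℕ}
  (hPlt : ∀ x ∈ P, x < m) (hQlt : ∀ x ∈ Q, x < m)
  (hPne : P ≠ []) (hQne : Q ≠ []) (hnd : (P ++ m :: Q).Nodup)

/-- The invariant set for the middle case. -/
def Smid (m : ℕ) (P Q : List ℕ) (x : List ℕ) : Prop :=
  ∃ P' Q', hopE P P' ∧ hopE Q Q' ∧ x = P' ++ m :: Q'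

include hPlt hQlt hPne hQne hnd in
lemma smid_step {x y : List ℕ} (hx : Smid m P Q x) (hstep : hopStep x y) : Smid m P Q y := by
  obtain ⟨P', Q', hPP', hQQ', rfl⟩ := hx
  obtain ⟨A, B, C, j, hB, hBlt, hA, hC, hveq, rfl⟩ := hstep
  have permP : P'.Perm P := (hopE_perm hPP').symm
  have permQ : Q'.Perm Q := (hopE_perm hQQ').symm
  have hP'lt : ∀ e ∈ P', e < m := fun e he => hPlt e (permP.subset he)
  have hQ'lt : ∀ e ∈ Q', e < m := fun e he => hQlt e (permQ.subset he)
  have hmP' : m ∉ P' := fun h => lt_irrefl m (hP'lt m h)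
  have hmQ' : m ∉ Q' := fun h => lt_irrefl m (hQ'lt m h)
  have hndx : (P' ++ m :: Q').Nodup :=
    ((permP.append ((permQ.cons m))).nodup_iff).2 hnd
  -- j ≠ m
  have hjm : j ≠ m := by
    rintro rfl
    have hndx' : (A ++ j :: (B ++ C)).Nodup := hveq ▸ hndx
    have hmA : j ∉ A := (nodup_mid hndx').1
    -- A must be empty
    have hAnil : A = [] := by
      by_contra hAne
      obtain ⟨a, ha⟩ := Option.ne_none_iff_exists'.1
        (fun h => hAne (List.getLast?_eq_none_iff.1 h))
      have haA : a ∈ A := mem_of_mem_getLast? (by simp [ha])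
      have := hA a (by simp [ha])
      have haP : a ∈ P' ++ j :: Q' := hveq ▸ (by exact mem_append_left _ haA)
      have : a < j ∨ a = j := by
        rcases mem_append.1 haP with h | h
        · exact Or.inl (hP'lt a h)
        · rcases mem_cons.1 h with h | h
          · exact Or.inr h
          · exact Or.inl (hQ'lt a h)
      rcases this with h | rfl
      · omega
      · exact hmA haA
    rw [hAnil, nil_append] at hveq
    obtain ⟨p, P'', rfl⟩ : ∃ p P'', P' = p :: P'' := by
      cases P' with
      | nil => exact absurd permP.symm.eq_nil hPne
      | cons p P'' => exact ⟨p, P'', rfl⟩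
    simp only [cons_append, cons.injEq] at hveq
    exact absurd hveq.1.symm (by have := hP'lt p (by simp); omega)
  -- j < m
  have hjx : j ∈ P' ++ m :: Q' := hveq ▸ (by simp)
  have hjlt : j < m := by
    rcases mem_append.1 hjx with h | h
    · exact hP'lt j h
    · rcases mem_cons.1 h with h | h
      · exact absurd h hjm
      · exact hQ'lt j h
  -- m is in A or C
  have hmx : m ∈ A ++ j :: (B ++ C) := hveq ▸ (by simp)
  have hmBC : m ∈ A ∨ m ∈ C := by
    rcases mem_append.1 hmx with h | h
    · exact Or.inl h
    · rcases mem_cons.1 h with h | h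
      · exact absurd h.symm hjm
      · rcases mem_append.1 h with h | h
        · exact absurd (hBlt m h) (by omega)
        · exact Or.inr h
  rcases hmBC with hmA | hmC
  · -- m ∈ A : the hop happens inside Q'
    obtain ⟨A₁, A₂, rfl⟩ := append_of_mem hmA
    have hxeq : P' ++ m :: Q' = A₁ ++ m :: (A₂ ++ j :: (B ++ C)) := by
      rw [hveq]; simp [append_assoc]
    have hmA₁ : m ∉ A₁ := by
      have := hxeq ▸ hndx
      exact (nodup_mid this).1
    obtain ⟨hPA, hQrest⟩ := eq_of_append_cons hxeq hmP' hmA₁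
    refine ⟨P', A₂ ++ (B ++ j :: C), hPP', .trans _ _ _ hQQ' (.rel _ _ ?_), ?_⟩
    · exact ⟨A₂, B, C, j, hB, hBlt, last_cond_inner hA, hC, hQrest, rfl⟩
    · rw [hPA]; simp [append_assoc]
  · -- m ∈ C : the hop happens inside P'
    obtain ⟨C₁, C₂, rfl⟩ := append_of_mem hmC
    have hxeq : P' ++ m :: Q' = (A ++ j :: (B ++ C₁)) ++ m :: C₂ := by
      rw [hveq]; simp [append_assoc]
    have hmpre : m ∉ A ++ j :: (B ++ C₁) := by
      have h2 : ((A ++ j :: (B ++ C₁)) ++ m :: C₂).Nodup := hxeq ▸ hndx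
      exact (nodup_mid h2).1
    obtain ⟨hPA, hQrest⟩ := (eq_of_append_cons hxeq.symm hmpre hmP')
    refine ⟨A ++ (B ++ j :: C₁), Q', .trans _ _ _ hPP' (.rel _ _ ?_), hQQ', ?_⟩
    · exact ⟨A, B, C₁, j, hB, hBlt, hA, head_cond_inner hC, hPA.symm, rfl⟩
    · rw [← hQrest]; simp [append_assoc]

include hPlt hQlt hPne hQne hnd in
lemma smid_step' {x y : List ℕ} (hx : Smid m P Q x) (hstep : hopStep y x) : Smid m P Q y := by
  obtain ⟨P', Q', hPP', hQQ', rfl⟩ := hx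
  obtain ⟨A, B, C, j, hB, hBlt, hA, hC, rfl, hueq⟩ := hstep
  have permP : P'.Perm P := (hopE_perm hPP').symm
  have permQ : Q'.Perm Q := (hopE_perm hQQ').symm
  have hP'lt : ∀ e ∈ P', e < m := fun e he => hPlt e (permP.subset he)
  have hQ'lt : ∀ e ∈ Q', e < m := fun e he => hQlt e (permQ.subset he)
  have hmP' : m ∉ P' := fun h => lt_irrefl m (hP'lt m h)
  have hmQ' : m ∉ Q' := fun h => lt_irrefl m (hQ'lt m h)
  have hndx : (P' ++ m :: Q').Nodup :=
    ((permP.append ((permQ.cons m))).nodup_iff).2 hnd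
  have hQ'ne : Q' ≠ [] := by
    intro h
    exact hQne (h ▸ permQ).symm.eq_nil
  have hxlt : ∀ e ∈ P' ++ m :: Q', e ≠ m → e < m := by
    intro e he hne
    rcases mem_append.1 he with h | h
    · exact hP'lt e h
    · rcases mem_cons.1 h with h | h
      · exact absurd h hne
      · exact hQ'lt e h
  -- j ≠ m
  have hjm : j ≠ m := by
    rintro rfl
    have hsh : P' ++ j :: Q' = (A ++ B) ++ j :: C := by rw [hueq]; simp [append_assoc]
    have hmC : j ∉ C := (nodup_mid (hsh ▸ hndx)).2
    have hCnil : C = [] := by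
      cases hcc : C with
      | nil => rfl
      | cons c C'' =>
        have hcx : c ∈ P' ++ j :: Q' := by
          rw [hueq]; simp [hcc]
        have : c ≠ j := fun h => hmC (by simp [hcc, h])
        have := hxlt c hcx this
        have := hC c (by simp [hcc])
        omega
    subst hCnil
    have h1 : (P' ++ j :: Q').getLast? = some j := by
      rw [hueq, ← append_assoc, getLast?_append_cons']
      rfl
    rw [getLast?_append_cons'] at h1
    obtain ⟨q, hq⟩ := Option.ne_none_iff_exists'.1
      (fun h => hQ'ne (List.getLast?_eq_none_iff.1 h))
    rw [hq] at h1
    have hqQ : q ∈ Q' := mem_of_mem_getLast? (by simp [hq])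
    have := hQ'lt q hqQ
    simp only [Option.or] at h1
    simp at h1
    omega
  -- j < m
  have hjlt : j < m := hxlt j (by rw [hueq]; simp) hjm
  have hmx : m ∈ A ++ (B ++ j :: C) := by
    have : m ∈ P' ++ m :: Q' := by simp
    rwa [hueq] at this
  have hmAC : m ∈ A ∨ m ∈ C := by
    rcases mem_append.1 hmx with h | h
    · exact Or.inl h
    · rcases mem_append.1 h with h | h
      · exact absurd (hBlt m h) (by omega)
      · rcases mem_cons.1 h with h | h
        · exact absurd h.symm hjm
        · exact Or.inr h
  rcases hmAC with hmA | hmC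
  · obtain ⟨A₁, A₂, rfl⟩ := append_of_mem hmA
    have hxeq : P' ++ m :: Q' = A₁ ++ m :: (A₂ ++ (B ++ j :: C)) := by
      rw [hueq]; simp [append_assoc]
    have hmA₁ : m ∉ A₁ := (nodup_mid (hxeq ▸ hndx)).1
    obtain ⟨hPA, hQrest⟩ := eq_of_append_cons hxeq hmP' hmA₁
    refine ⟨P', A₂ ++ j :: (B ++ C), hPP',
      .trans _ _ _ hQQ' (.symm _ _ (.rel _ _ ?_)), ?_⟩
    · exact ⟨A₂, B, C, j, hB, hBlt, last_cond_inner hA, hC, rfl, hQrest⟩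
    · rw [hPA]; simp [append_assoc]
  · obtain ⟨C₁, C₂, rfl⟩ := append_of_mem hmC
    have hxeq : P' ++ m :: Q' = (A ++ (B ++ j :: C₁)) ++ m :: C₂ := by
      rw [hueq]; simp [append_assoc]
    have hmpre : m ∉ A ++ (B ++ j :: C₁) := (nodup_mid (hxeq ▸ hndx)).1
    obtain ⟨hPA, hQrest⟩ := eq_of_append_cons hxeq hmP' hmpre
    refine ⟨A ++ j :: (B ++ C₁), Q',
      .trans _ _ _ hPP' (.symm _ _ (.rel _ _ ?_)), hQQ', ?_⟩
    · exact ⟨A, B, C₁, j, hB, hBlt, hA, head_cond_inner hC, rfl, hPA⟩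
    · rw [← hQrest]; simp [append_assoc]

include hPlt hQlt hPne hQne hnd in
theorem hopE_mid_iff (x : List ℕ) :
    hopE (P ++ m :: Q) x ↔ Smid m P Q x := by
  constructor
  · intro h
    have key : ∀ a b : List ℕ, Relation.EqvGen hopStep a b → (Smid m P Q a ↔ Smid m P Q b) := by
      intro a b hab
      induction hab with
      | rel u v huv =>
        exact ⟨fun hu => smid_step hPlt hQlt hPne hQne hnd hu huv,
          fun hv => smid_step' hPlt hQlt hPne hQne hnd hv huv⟩
      | refl => exact Iff.rfl
      | symm _ _ _ ih => exact ih.symm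
      | trans _ _ _ _ _ ih1 ih2 => exact ih1.trans ih2
    exact (key _ _ h).1 ⟨P, Q, .refl _, .refl _, rfl⟩
  · rintro ⟨P', Q', hPP', hQQ', rfl⟩
    exact hopE_mid_congr hPP' hQQ' hPlt hQlt

end Mid

section Bdry

variable {m : ℕ} {T : List ℕ}
  (hTlt : ∀ x ∈ T, x < m) (hTne : T ≠ []) (hnd : (m :: T).Nodup)

/-- The invariant set for the boundary case. -/
def Sbd (m : ℕ) (T : List ℕ) (x : List ℕ) : Prop :=
  (∃ K, hopE T K ∧ x = m :: K) ∨ (∃ K, hopE T K ∧ x = K ++ [m])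

include hTlt hTne hnd in
lemma sbd_step {x y : List ℕ} (hx : Sbd m T x) (hstep : hopStep x y) : Sbd m T y := by
  obtain ⟨A, B, C, j, hB, hBlt, hA, hC, hveq, rfl⟩ := hstep
  have hmT : m ∉ T := fun h => lt_irrefl m (hTlt m h)
  rcases hx with ⟨K, hTK, rfl⟩ | ⟨K, hTK, rfl⟩
  all_goals
    have permK : K.Perm T := (hopE_perm hTK).symm
    have hKlt : ∀ e ∈ K, e < m := fun e he => hTlt e (permK.subset he)
    have hmK : m ∉ K := fun h => lt_irrefl m (hKlt m h)
    have hKne : K ≠ [] := fun h => hTne (h ▸ permK).symm.eq_nil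
  · -- x = m :: K
    have hndx : (m :: K).Nodup := (((permK.cons m)).nodup_iff).2 hnd
    by_cases hj : j = m
    · subst hj
      have hndx' : (A ++ j :: (B ++ C)).Nodup := hveq ▸ hndx
      have hmA : j ∉ A := (nodup_mid hndx').1
      have hAnil : A = [] := by
        by_contra hAne
        obtain ⟨a, ha⟩ := Option.ne_none_iff_exists'.1
          (fun h => hAne (List.getLast?_eq_none_iff.1 h))
        have haA : a ∈ A := mem_of_mem_getLast? (by simp [ha])
        have h1 := hA a (by simp [ha])
        have haK : a ∈ j :: K := hveq ▸ (mem_append_left _ haA)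
        rcases mem_cons.1 haK with h | h
        · exact hmA (h ▸ haA)
        · have := hKlt a h; omega
      subst hAnil
      simp only [nil_append, cons.injEq, true_and] at hveq
      have hCnil : C = [] := by
        cases hcc : C with
        | nil => rfl
        | cons c C'' =>
          have hcK : c ∈ K := hveq ▸ (by simp [hcc])
          have := hKlt c hcK
          have := hC c (by simp [hcc])
          omega
      subst hCnil
      refine Or.inr ⟨K, hTK, ?_⟩
      rw [hveq]; simp
    · have hAne : A ≠ [] := by
        rintro rfl
        simp only [nil_append, cons.injEq] at hveq
        exact hj hveq.1.symm
      obtain ⟨a, A₂, rfl⟩ : ∃ a A₂, A = a :: A₂ := by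
        cases A with
        | nil => exact absurd rfl hAne
        | cons a A₂ => exact ⟨a, A₂, rfl⟩
      simp only [cons_append, cons.injEq] at hveq
      obtain ⟨rfl, hKeq⟩ := hveq
      have hA' : ∀ x ∈ A₂.getLast?, j < x :=
        last_cond_inner (A₁ := []) (m := m) (by simpa using hA)
      refine Or.inl ⟨A₂ ++ (B ++ j :: C), .trans _ _ _ hTK (.rel _ _ ?_), by simp⟩
      exact ⟨A₂, B, C, j, hB, hBlt, hA', hC, hKeq, rfl⟩
  · -- x = K ++ [m]
    have hndx : (K ++ [m]).Nodup := ((permK.append (Perm.refl [m])).nodup_iff).2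
      ((List.perm_middle.trans (Perm.refl _)).nodup_iff.2 (by simpa using hnd))
    by_cases hj : j = m
    · subst hj
      have hndx' : (A ++ j :: (B ++ C)).Nodup := hveq ▸ hndx
      have hmA : j ∉ A := (nodup_mid hndx').1
      have hveq' : K ++ j :: [] = A ++ j :: (B ++ C) := hveq
      obtain ⟨-, habs⟩ := eq_of_append_cons hveq' hmK hmA
      exact absurd habs.symm (by simp [hB])
    · have hjlt : j < m := by
        have hjx : j ∈ K ++ [m] := hveq ▸ (by simp)
        rcases mem_append.1 hjx with h | h
        · exact hKlt j h
        · simp at h; exact absurd h hj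
      have hmx : m ∈ A ++ j :: (B ++ C) := hveq ▸ (by simp)
      have hmAC : m ∈ A ∨ m ∈ C := by
        rcases mem_append.1 hmx with h | h
        · exact Or.inl h
        · rcases mem_cons.1 h with h | h
          · exact absurd h.symm hj
          · rcases mem_append.1 h with h | h
            · exact absurd (hBlt m h) (by omega)
            · exact Or.inr h
      rcases hmAC with hmA | hmC
      · obtain ⟨A₁, A₂, rfl⟩ := append_of_mem hmA
        have hxeq : K ++ m :: [] = A₁ ++ m :: (A₂ ++ j :: (B ++ C)) := by
          rw [show K ++ m :: [] = K ++ [m] from rfl, hveq]; simp [append_assoc]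
        have hmA₁ : m ∉ A₁ := by
          have : (A₁ ++ m :: (A₂ ++ j :: (B ++ C))).Nodup := by
            rw [← hxeq]; simpa using hndx
          exact (nodup_mid this).1
        obtain ⟨-, habs⟩ := eq_of_append_cons hxeq hmK hmA₁
        exact absurd habs.symm (by simp)
      · obtain ⟨C₁, C₂, rfl⟩ := append_of_mem hmC
        have hxeq : K ++ m :: [] = (A ++ j :: (B ++ C₁)) ++ m :: C₂ := by
          rw [show K ++ m :: [] = K ++ [m] from rfl, hveq]; simp [append_assoc]
        have hmpre : m ∉ A ++ j :: (B ++ C₁) := by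
          have : ((A ++ j :: (B ++ C₁)) ++ m :: C₂).Nodup := by
            rw [← hxeq]; simpa using hndx
          exact (nodup_mid this).1
        obtain ⟨hKeq, hC₂⟩ := eq_of_append_cons hxeq hmK hmpre
        refine Or.inr ⟨A ++ (B ++ j :: C₁), .trans _ _ _ hTK (.rel _ _ ?_), ?_⟩
        · exact ⟨A, B, C₁, j, hB, hBlt, hA, head_cond_inner hC, hKeq, rfl⟩
        · rw [← hC₂]; simp [append_assoc]

include hTlt hTne hnd in
lemma sbd_step' {x y : List ℕ} (hx : Sbd m T x) (hstep : hopStep y x) : Sbd m T y := by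
  obtain ⟨A, B, C, j, hB, hBlt, hA, hC, rfl, hueq⟩ := hstep
  have hmT : m ∉ T := fun h => lt_irrefl m (hTlt m h)
  rcases hx with ⟨K, hTK, hxeq⟩ | ⟨K, hTK, hxeq⟩
  all_goals
    have permK : K.Perm T := (hopE_perm hTK).symm
    have hKlt : ∀ e ∈ K, e < m := fun e he => hTlt e (permK.subset he)
    have hmK : m ∉ K := fun h => lt_irrefl m (hKlt m h)
    have hKne : K ≠ [] := fun h => hTne (h ▸ permK).symm.eq_nil
  · -- x = m :: K
    have hndx : (m :: K).Nodup := (((permK.cons m)).nodup_iff).2 hnd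
    rw [hxeq] at hueq
    by_cases hj : j = m
    · subst hj
      exfalso
      have hsh : j :: K = (A ++ B) ++ j :: C := by rw [hueq]; simp [append_assoc]
      have hmC : j ∉ C := (nodup_mid (hsh ▸ hndx)).2
      have hCnil : C = [] := by
        cases hcc : C with
        | nil => rfl
        | cons c C'' =>
          have hcx : c ∈ j :: K := by rw [hueq]; simp [hcc]
          rcases mem_cons.1 hcx with h | h
          · exact ((hmC (by simp [hcc, ← h])).elim)
          · have := hKlt c h
            have := hC c (by simp [hcc])
            omega
      subst hCnil
      have h1 : (j :: K).getLast? = some j := by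
        rw [hueq, ← append_assoc, getLast?_append_cons']
        rfl
      rw [getLast?_cons_or] at h1
      obtain ⟨q, hq⟩ := Option.ne_none_iff_exists'.1
        (fun h => hKne (List.getLast?_eq_none_iff.1 h))
      rw [hq] at h1
      have hqK : q ∈ K := mem_of_mem_getLast? (by simp [hq])
      have := hKlt q hqK
      simp only [Option.or] at h1
      simp at h1
      omega
    · have hAne : A ≠ [] := by
        rintro rfl
        simp only [nil_append] at hueq
        obtain ⟨b, B', rfl⟩ : ∃ b B', B = b :: B' := by
          cases B with
          | nil => exact absurd rfl hB
          | cons b B' => exact ⟨b, B', rfl⟩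
        simp only [cons_append, cons.injEq] at hueq
        obtain ⟨hmb, hK2⟩ := hueq
        have h1 := hBlt b (by simp)
        have h2 : j < m := hKlt j (by rw [hK2]; simp)
        omega
      obtain ⟨a, A₂, rfl⟩ : ∃ a A₂, A = a :: A₂ := by
        cases A with
        | nil => exact absurd rfl hAne
        | cons a A₂ => exact ⟨a, A₂, rfl⟩
      simp only [cons_append, cons.injEq] at hueq
      obtain ⟨rfl, hKeq⟩ := hueq
      have hA' : ∀ x ∈ A₂.getLast?, j < x :=
        last_cond_inner (A₁ := []) (m := m) (by simpa using hA)
      refine Or.inl ⟨A₂ ++ j :: (B ++ C), .trans _ _ _ hTK (.symm _ _ (.rel _ _ ?_)), by simp⟩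
      exact ⟨A₂, B, C, j, hB, hBlt, hA', hC, rfl, hKeq⟩
  · -- x = K ++ [m]
    have hndx : (K ++ [m]).Nodup := by
      have h0 : (m :: K).Nodup := (((permK.cons m)).nodup_iff).2 hnd
      have hp : (K ++ [m]).Perm (m :: K) := by
        simpa using (List.perm_middle (a := m) (l₁ := K) (l₂ := ([] : List ℕ)))
      exact hp.nodup_iff.2 h0
    rw [hxeq] at hueq
    by_cases hj : j = m
    · subst hj
      have hndsh : ((A ++ B) ++ j :: C).Nodup := by
        have : K ++ [j] = (A ++ B) ++ j :: C := by rw [hueq]; simp [append_assoc]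
        exact this ▸ hndx
      have hmC : j ∉ C := (nodup_mid hndsh).2
      have hmAB : j ∉ A ++ B := (nodup_mid hndsh).1
      have hCnil : C = [] := by
        cases hcc : C with
        | nil => rfl
        | cons c C'' =>
          have hcx : c ∈ K ++ [j] := by rw [hueq]; simp [hcc]
          rcases mem_append.1 hcx with h | h
          · have := hKlt c h
            have := hC c (by simp [hcc])
            omega
          · simp at h
            exact ((hmC (by simp [hcc, h])).elim)
      subst hCnil
      have hKAB : K = A ++ B := by
        have : K ++ [j] = (A ++ B) ++ [j] := by rw [hueq]; simp [append_assoc]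
        exact append_cancel_right this
      have hAnil : A = [] := by
        by_contra hAne
        obtain ⟨a, ha⟩ := Option.ne_none_iff_exists'.1
          (fun h => hAne (List.getLast?_eq_none_iff.1 h))
        have haA : a ∈ A := mem_of_mem_getLast? (by simp [ha])
        have h1 := hA a (by simp [ha])
        have : a ∈ K := hKAB ▸ mem_append_left _ haA
        have := hKlt a this
        omega
      subst hAnil
      simp only [nil_append] at hKAB ⊢
      exact Or.inl ⟨B, hKAB ▸ hTK, by simp⟩
    · have hjlt : j < m := by
        have hjx : j ∈ K ++ [m] := by rw [hueq]; simp
        rcases mem_append.1 hjx with h | h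
        · exact hKlt j h
        · simp at h; exact absurd h hj
      have hmx : m ∈ A ++ (B ++ j :: C) := by
        have : m ∈ K ++ [m] := by simp
        rwa [hueq] at this
      have hmAC : m ∈ A ∨ m ∈ C := by
        rcases mem_append.1 hmx with h | h
        · exact Or.inl h
        · rcases mem_append.1 h with h | h
          · exact absurd (hBlt m h) (by omega)
          · rcases mem_cons.1 h with h | h
            · exact absurd h.symm hj
            · exact Or.inr h
      rcases hmAC with hmA | hmC
      · obtain ⟨A₁, A₂, rfl⟩ := append_of_mem hmA
        have hxeq2 : K ++ m :: [] = A₁ ++ m :: (A₂ ++ (B ++ j :: C)) := by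
          rw [show K ++ m :: [] = K ++ [m] from rfl, hueq]; simp [append_assoc]
        have hmA₁ : m ∉ A₁ := by
          have : (A₁ ++ m :: (A₂ ++ (B ++ j :: C))).Nodup := by
            rw [← hxeq2]; simpa using hndx
          exact (nodup_mid this).1
        obtain ⟨-, habs⟩ := eq_of_append_cons hxeq2 hmK hmA₁
        exact absurd habs.symm (by simp [hB])
      · obtain ⟨C₁, C₂, rfl⟩ := append_of_mem hmC
        have hxeq2 : K ++ m :: [] = (A ++ (B ++ j :: C₁)) ++ m :: C₂ := by
          rw [show K ++ m :: [] = K ++ [m] from rfl, hueq]; simp [append_assoc]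
        have hmpre : m ∉ A ++ (B ++ j :: C₁) := by
          have : ((A ++ (B ++ j :: C₁)) ++ m :: C₂).Nodup := by
            rw [← hxeq2]; simpa using hndx
          exact (nodup_mid this).1
        obtain ⟨hKeq, hC₂⟩ := eq_of_append_cons hxeq2 hmK hmpre
        refine Or.inr ⟨A ++ j :: (B ++ C₁), .trans _ _ _ hTK (.symm _ _ (.rel _ _ ?_)), ?_⟩
        · exact ⟨A, B, C₁, j, hB, hBlt, hA, head_cond_inner hC, rfl, hKeq⟩
        · rw [← hC₂]; simp [append_assoc]

include hTlt hTne hnd in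
theorem hopE_bdry_iff (x : List ℕ) : hopE (m :: T) x ↔ Sbd m T x := by
  constructor
  · intro h
    have key : ∀ a b : List ℕ, Relation.EqvGen hopStep a b → (Sbd m T a ↔ Sbd m T b) := by
      intro a b hab
      induction hab with
      | rel u v huv =>
        exact ⟨fun hu => sbd_step hTlt hTne hnd hu huv,
          fun hv => sbd_step' hTlt hTne hnd hv huv⟩
      | refl => exact Iff.rfl
      | symm _ _ _ ih => exact ih.symm
      | trans _ _ _ _ _ ih1 ih2 => exact ih1.trans ih2
    exact (key _ _ h).1 (Or.inl ⟨T, .refl _, rfl⟩)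
  · rintro (⟨K, hTK, rfl⟩ | ⟨K, hTK, rfl⟩)
    · exact hopE_prepend_big [] hTK hTlt
    · have hKlt : ∀ e ∈ K, e < m := fun e he => hTlt e ((hopE_perm hTK).symm.subset he)
      have hKne : K ≠ [] := fun h => hTne (h ▸ (hopE_perm hTK).symm).symm.eq_nil
      refine .trans _ _ _ (hopE_prepend_big [] hTK hTlt) (.rel _ _ ?_)
      exact ⟨[], K, [], m, hKne, hKlt, by simp, by simp, by simp, by simp⟩

end Bdry

open Polynomial

open scoped Classical in
noncomputable def hopFinset (l : List ℕ) : Finset (List ℕ) :=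
  l.permutations.toFinset.filter (hopE l)

lemma mem_hopFinset {l x : List ℕ} : x ∈ hopFinset l ↔ hopE l x := by
  classical
  constructor
  · intro h
    exact (Finset.mem_filter.1 h).2
  · intro h
    exact Finset.mem_filter.2 ⟨List.mem_toFinset.2 (List.mem_permutations.2 (hopE_perm h).symm), h⟩

lemma hopE_class_eq {a b : List ℕ} (h : hopE a b) : hopFinset a = hopFinset b := by
  ext x
  simp only [mem_hopFinset]
  exact ⟨fun h2 => .trans _ _ _ (.symm _ _ h) h2, fun h2 => .trans _ _ _ h h2⟩

section Sums

variable {m : ℕ}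

lemma hopFinset_bdry {T : List ℕ} (hTlt : ∀ x ∈ T, x < m) (hTne : T ≠ [])
    (hnd : (m :: T).Nodup) :
    hopFinset (m :: T) =
      (hopFinset T).image (fun K => m :: K) ∪ (hopFinset T).image (fun K => K ++ [m]) := by
  ext x
  simp only [mem_hopFinset, hopE_bdry_iff hTlt hTne hnd, Sbd, Finset.mem_union,
    Finset.mem_image]
  constructor
  · rintro (⟨K, hK, rfl⟩ | ⟨K, hK, rfl⟩)
    · exact Or.inl ⟨K, hK, rfl⟩
    · exact Or.inr ⟨K, hK, rfl⟩
  · rintro (⟨K, hK, rfl⟩ | ⟨K, hK, rfl⟩)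
    · exact Or.inl ⟨K, hK, rfl⟩
    · exact Or.inr ⟨K, hK, rfl⟩

lemma bdry_sum {T : List ℕ} (hTlt : ∀ x ∈ T, x < m) (hTne : T ≠ [])
    (hnd : (m :: T).Nodup) :
    ∑ u ∈ hopFinset (m :: T), (X : Polynomial ℕ) ^ ldesL u
      = (1 + X) * ∑ u ∈ hopFinset T, (X : Polynomial ℕ) ^ ldesL u := by
  rw [hopFinset_bdry hTlt hTne hnd]
  have hdisj : Disjoint ((hopFinset T).image (fun K => m :: K))
      ((hopFinset T).image (fun K => K ++ [m])) := by
    rw [Finset.disjoint_left]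
    rintro x hx1 hx2
    obtain ⟨K₁, hK₁, rfl⟩ := Finset.mem_image.1 hx1
    obtain ⟨K₂, hK₂, heq⟩ := Finset.mem_image.1 hx2
    have permK₂ : K₂.Perm T := (hopE_perm (mem_hopFinset.1 hK₂)).symm
    have hK₂ne : K₂ ≠ [] := fun h => hTne (h ▸ permK₂).symm.eq_nil
    obtain ⟨k, K₂', rfl⟩ : ∃ k K₂', K₂ = k :: K₂' := by
      cases K₂ with
      | nil => exact absurd rfl hK₂ne
      | cons k K₂' => exact ⟨k, K₂', rfl⟩
    simp only [cons_append, cons.injEq] at heq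
    have := hTlt k (permK₂.subset (by simp))
    omega
  rw [Finset.sum_union hdisj]
  have h1 : ∑ u ∈ (hopFinset T).image (fun K => m :: K), (X : Polynomial ℕ) ^ ldesL u
      = X * ∑ u ∈ hopFinset T, (X : Polynomial ℕ) ^ ldesL u := by
    rw [Finset.sum_image (fun a _ b _ h => by simpa using h), Finset.mul_sum]
    refine Finset.sum_congr rfl fun K hK => ?_
    have permK : K.Perm T := (hopE_perm (mem_hopFinset.1 hK)).symm
    have hKlt : ∀ e ∈ K, e < m := fun e he => hTlt e (permK.subset he)
    have hKne : K ≠ [] := fun h => hTne (h ▸ permK).symm.eq_nil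
    rw [ldesL_cons_max hKlt, if_neg hKne, pow_add, pow_one]
  have h2 : ∑ u ∈ (hopFinset T).image (fun K => K ++ [m]), (X : Polynomial ℕ) ^ ldesL u
      = ∑ u ∈ hopFinset T, (X : Polynomial ℕ) ^ ldesL u := by
    rw [Finset.sum_image (fun a _ b _ h => append_cancel_right h)]
    refine Finset.sum_congr rfl fun K hK => ?_
    have permK : K.Perm T := (hopE_perm (mem_hopFinset.1 hK)).symm
    have hKlt : ∀ e ∈ K, e < m := fun e he => hTlt e (permK.subset he)
    rw [ldesL_append_max hKlt]
  rw [h1, h2]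
  ring

lemma hopFinset_mid {P Q : List ℕ} (hPlt : ∀ x ∈ P, x < m) (hQlt : ∀ x ∈ Q, x < m)
    (hPne : P ≠ []) (hQne : Q ≠ []) (hnd : (P ++ m :: Q).Nodup) :
    hopFinset (P ++ m :: Q) =
      ((hopFinset P) ×ˢ (hopFinset Q)).image (fun z => z.1 ++ m :: z.2) := by
  ext x
  simp only [mem_hopFinset, hopE_mid_iff hPlt hQlt hPne hQne hnd, Smid, Finset.mem_image,
    Finset.mem_product]
  constructor
  · rintro ⟨P', Q', hP', hQ', rfl⟩
    exact ⟨(P', Q'), ⟨hP', hQ'⟩, rfl⟩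
  · rintro ⟨⟨P', Q'⟩, ⟨hP', hQ'⟩, rfl⟩
    exact ⟨P', Q', hP', hQ', rfl⟩

lemma mid_sum {P Q : List ℕ} (hPlt : ∀ x ∈ P, x < m) (hQlt : ∀ x ∈ Q, x < m)
    (hPne : P ≠ []) (hQne : Q ≠ []) (hnd : (P ++ m :: Q).Nodup) :
    ∑ u ∈ hopFinset (P ++ m :: Q), (X : Polynomial ℕ) ^ ldesL u
      = X * (∑ u ∈ hopFinset P, (X : Polynomial ℕ) ^ ldesL u)
          * (∑ u ∈ hopFinset Q, (X : Polynomial ℕ) ^ ldesL u) := by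
  rw [hopFinset_mid hPlt hQlt hPne hQne hnd]
  rw [Finset.sum_image ?inj]
  case inj =>
    rintro ⟨P₁, Q₁⟩ h1 ⟨P₂, Q₂⟩ h2 heq
    simp only [Finset.coe_product, Set.mem_prod, Finset.mem_coe, Finset.mem_product] at h1 h2
    have hm1 : m ∉ P₁ := fun h =>
      lt_irrefl m (hPlt m ((hopE_perm (mem_hopFinset.1 h1.1)).symm.subset h))
    have hm2 : m ∉ P₂ := fun h =>
      lt_irrefl m (hPlt m ((hopE_perm (mem_hopFinset.1 h2.1)).symm.subset h))
    obtain ⟨h3, h4⟩ := eq_of_append_cons heq hm1 hm2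
    exact Prod.ext h3 h4
  rw [Finset.sum_product]
  have hstep : ∑ x ∈ hopFinset P, ∑ y ∈ hopFinset Q,
        (X : Polynomial ℕ) ^ ldesL ((x, y).1 ++ m :: (x, y).2)
      = ∑ x ∈ hopFinset P, ∑ y ∈ hopFinset Q,
        (X : Polynomial ℕ) ^ ldesL x * (X * (X : Polynomial ℕ) ^ ldesL y) := by
    refine Finset.sum_congr rfl fun P' hP' => Finset.sum_congr rfl fun Q' hQ' => ?_
    have permP : P'.Perm P := (hopE_perm (mem_hopFinset.1 hP')).symm
    have permQ : Q'.Perm Q := (hopE_perm (mem_hopFinset.1 hQ')).symm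
    have hP'lt : ∀ e ∈ P', e < m := fun e he => hPlt e (permP.subset he)
    have hQ'lt : ∀ e ∈ Q', e < m := fun e he => hQlt e (permQ.subset he)
    have hQ'ne : Q' ≠ [] := fun h => hQne (h ▸ permQ).symm.eq_nil
    show (X : Polynomial ℕ) ^ ldesL (P' ++ m :: Q') = _
    rw [ldesL_split m P' Q', ldesL_append_max hP'lt, ldesL_cons_max hQ'lt, if_neg hQ'ne,
      pow_add, pow_add, pow_one]
  rw [hstep, ← Finset.sum_mul_sum, Finset.mul_sum]
  have : ∀ i ∈ hopFinset Q, (∑ i ∈ hopFinset P, (X : Polynomial ℕ) ^ ldesL i) * (X * X ^ ldesL i)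
      = ((X * ∑ x ∈ hopFinset P, (X : Polynomial ℕ) ^ ldesL x)) * X ^ ldesL i :=
    fun i _ => by ring
  rw [Finset.sum_congr rfl this, ← Finset.mul_sum]

end Sums

lemma hopFinset_nil : hopFinset [] = {[]} := by
  ext x
  simp only [mem_hopFinset, Finset.mem_singleton]
  constructor
  · intro h
    exact (hopE_perm h).symm.eq_nil
  · rintro rfl
    exact .refl _

lemma hopFinset_singleton (m : ℕ) : hopFinset [m] = {[m]} := by
  ext x
  simp only [mem_hopFinset, Finset.mem_singleton]
  constructor
  · intro h
    have := (hopE_perm h).symm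
    rw [List.perm_singleton] at this
    exact this
  · rintro rfl
    exact .refl _

theorem hop_sum_list : ∀ (l : List ℕ), l.Nodup →
    ∑ u ∈ hopFinset l, (X : Polynomial ℕ) ^ ldesL u
      = (X : Polynomial ℕ) ^ lpkL l * (1 + X) ^ (l.length - 1 - 2 * lpkL l) := by
  intro l
  obtain ⟨n, hn⟩ : ∃ n, l.length = n := ⟨_, rfl⟩
  induction n using Nat.strong_induction_on generalizing l with
  | _ n IH =>
  intro hnd
  rcases eq_or_ne l [] with rfl | hne
  · simp [hopFinset_nil, ldesL, lpkL]
  -- extract the maximum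
  obtain ⟨m, hm⟩ := List.maximum_ne_bot_of_ne_nil hne |> Option.ne_none_iff_exists'.1
  have hmmem : m ∈ l := List.maximum_mem hm
  have hmle : ∀ x ∈ l, x ≤ m := fun x hx => List.le_maximum_of_mem hx hm
  obtain ⟨P, Q, rfl⟩ := append_of_mem hmmem
  have hmP : m ∉ P := (nodup_mid hnd).1
  have hmQ : m ∉ Q := (nodup_mid hnd).2
  have hPlt : ∀ x ∈ P, x < m := fun x hx =>
    lt_of_le_of_ne (hmle x (by simp [hx])) (fun h => hmP (h ▸ hx))
  have hQlt : ∀ x ∈ Q, x < m := fun x hx =>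
    lt_of_le_of_ne (hmle x (by simp [hx])) (fun h => hmQ (h ▸ hx))
  have hndP : P.Nodup := ((List.nodup_append).1 hnd).1
  have hndQ : Q.Nodup := (List.nodup_cons.1 ((List.nodup_append).1 hnd).2.1).2
  rcases eq_or_ne P [] with rfl | hPne <;> rcases eq_or_ne Q [] with rfl | hQne
  · -- l = [m]
    subst hn
    simp [hopFinset_singleton, ldesL, lpkL]
  · -- l = m :: Q
    have hndmQ : (m :: Q).Nodup := by simpa using hnd
    have hIH := IH Q.length (by simp at hn; omega) Q rfl hndQ
    rw [nil_append] at *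
    rw [bdry_sum hQlt hQne hndmQ, hIH, lpkL_cons_max hQlt]
    have hb := lpkL_bound Q
    have hQlen : 1 ≤ Q.length := by
      cases Q with
      | nil => exact absurd rfl hQne
      | cons _ _ => simp
    rw [Nat.max_eq_right hQlen] at hb
    have h2 : 2 * lpkL Q + 1 ≤ Q.length := hb
    have harith : (m :: Q).length - 1 - 2 * lpkL Q = (Q.length - 1 - 2 * lpkL Q) + 1 := by
      simp only [length_cons]
      omega
    rw [harith, pow_succ]
    ring
  · -- l = P ++ [m]
    have hndPm : (P ++ [m]).Nodup := hnd
    have hndmP : (m :: P).Nodup := by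
      have hp : (P ++ [m]).Perm (m :: P) := by
        simpa using (List.perm_middle (a := m) (l₁ := P) (l₂ := ([] : List ℕ)))
      exact hp.nodup_iff.1 hndPm
    have hswap : hopE (m :: P) (P ++ [m]) := by
      refine .rel _ _ ⟨[], P, [], m, hPne, hPlt, by simp, by simp, by simp, by simp⟩
    have hclass : hopFinset (P ++ [m]) = hopFinset (m :: P) := (hopE_class_eq hswap).symm
    have hIH := IH P.length (by simp at hn; omega) P rfl hndP
    rw [hclass, bdry_sum hPlt hPne hndmP, hIH, lpkL_append_max hPlt]
    have hb := lpkL_bound P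
    have hPlen : 1 ≤ P.length := by
      cases P with
      | nil => exact absurd rfl hPne
      | cons _ _ => simp
    rw [Nat.max_eq_right hPlen] at hb
    have h2 : 2 * lpkL P + 1 ≤ P.length := hb
    have harith : (P ++ [m]).length - 1 - 2 * lpkL P = (P.length - 1 - 2 * lpkL P) + 1 := by
      simp only [length_append, length_cons, length_nil]
      omega
    rw [harith, pow_succ]
    ring
  · -- l = P ++ m :: Q with both nonempty
    have hIHP := IH P.length (by simp at hn; omega) P rfl hndP
    have hIHQ := IH Q.length (by simp at hn; omega) Q rfl hndQ
    rw [mid_sum hPlt hQlt hPne hQne hnd, hIHP, hIHQ, lpkL_mid hPlt hQlt hPne hQne]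
    have hbP := lpkL_bound P
    have hbQ := lpkL_bound Q
    have hPlen : 1 ≤ P.length := by
      cases P with
      | nil => exact absurd rfl hPne
      | cons _ _ => simp
    have hQlen : 1 ≤ Q.length := by
      cases Q with
      | nil => exact absurd rfl hQne
      | cons _ _ => simp
    rw [Nat.max_eq_right hPlen] at hbP
    rw [Nat.max_eq_right hQlen] at hbQ
    have h2P : 2 * lpkL P + 1 ≤ P.length := hbP
    have h2Q : 2 * lpkL Q + 1 ≤ Q.length := hbQ
    have harith : (P ++ m :: Q).length - 1 - 2 * (lpkL P + lpkL Q + 1)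
        = (P.length - 1 - 2 * lpkL P) + (Q.length - 1 - 2 * lpkL Q) := by
      simp only [length_append, length_cons]
      omega
    rw [harith, pow_add, pow_add, pow_succ]
    ring

-- chunk 7 (to be inserted at end of ListLevel section)
lemma ldesL_eq_card : ∀ l : List ℕ,
    ldesL l = ((Finset.range (l.length - 1)).filter
      fun i => l.getD (i + 1) 0 < l.getD i 0).card
  | [] => by simp [ldesL]
  | [a] => by simp [ldesL]
  | a :: b :: t => by
    rw [Finset.card_filter]
    simp only [length_cons, Nat.add_sub_cancel]
    rw [Finset.sum_range_succ']
    have h1 : ∀ i, (if (a :: b :: t).getD (i + 1 + 1) 0 < (a :: b :: t).getD (i + 1) 0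
        then (1 : ℕ) else 0)
        = (if (b :: t).getD (i + 1) 0 < (b :: t).getD i 0 then 1 else 0) := by
      intro i
      simp [List.getD_cons_succ]
    simp only [h1]
    have h2 := ldesL_eq_card (b :: t)
    rw [Finset.card_filter] at h2
    simp only [length_cons, Nat.add_sub_cancel] at h2
    rw [show ldesL (a :: b :: t) = (if b < a then 1 else 0) + ldesL (b :: t) from rfl, h2]
    simp [List.getD_cons_succ, List.getD_cons_zero]
    ring

lemma lpkL_eq_card : ∀ l : List ℕ,
    lpkL l = ((Finset.range l.length).filter
      fun i => 0 < i ∧ i + 1 < l.length ∧ l.getD (i - 1) 0 < l.getD i 0 ∧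
        l.getD (i + 1) 0 < l.getD i 0).card
  | [] => by simp [lpkL]
  | [a] => by simp [lpkL]
  | a :: b :: t => by
    rw [Finset.card_filter]
    simp only [length_cons]
    rw [Finset.sum_range_succ', Finset.sum_range_succ']
    have h2 := lpkL_eq_card (b :: t)
    rw [Finset.card_filter] at h2
    simp only [length_cons] at h2
    rw [Finset.sum_range_succ'] at h2
    have hshift : ∀ i, (if 0 < i + 1 + 1 ∧ i + 1 + 1 + 1 < t.length + 1 + 1 ∧
          (a :: b :: t).getD (i + 1 + 1 - 1) 0 < (a :: b :: t).getD (i + 1 + 1) 0 ∧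
          (a :: b :: t).getD (i + 1 + 1 + 1) 0 < (a :: b :: t).getD (i + 1 + 1) 0
        then (1 : ℕ) else 0)
        = (if 0 < i + 1 ∧ i + 1 + 1 < t.length + 1 ∧
            (b :: t).getD (i + 1 - 1) 0 < (b :: t).getD (i + 1) 0 ∧
            (b :: t).getD (i + 1 + 1) 0 < (b :: t).getD (i + 1) 0 then 1 else 0) := by
      intro i
      have e1 : i + 1 + 1 - 1 = (i + 1 - 1) + 1 := by omega
      rw [e1]
      simp only [List.getD_cons_succ]
      congr 1
      simp only [eq_iff_iff]
      constructor
      · rintro ⟨-, h, h3, h4⟩; exact ⟨Nat.succ_pos _, by omega, h3, h4⟩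
      · rintro ⟨-, h, h3, h4⟩; exact ⟨Nat.succ_pos _, by omega, h3, h4⟩
    simp only [hshift]
    rw [lpkL_cons₂, h2]
    have hfirst : (if 0 < 0 + 1 ∧ 0 + 1 + 1 < t.length + 1 + 1 ∧
          (a :: b :: t).getD (0 + 1 - 1) 0 < (a :: b :: t).getD (0 + 1) 0 ∧
          (a :: b :: t).getD (0 + 1 + 1) 0 < (a :: b :: t).getD (0 + 1) 0
        then (1 : ℕ) else 0)
        = (if a < b ∧ t.headD b < b then 1 else 0) := by
      cases t with
      | nil => simp
      | cons c t' => simp [List.getD_cons_succ, List.getD_cons_zero, and_assoc]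
    rw [hfirst]
    simp
    ring

end ListLevel

-- chunk 8: bridges (after ListLevel section, before main theorem)
open List in
lemma word_length (n : ℕ) (w : Equiv.Perm (Fin n)) : (word n w).length = n := by
  simp [word]

open List in
lemma word_getD (n : ℕ) (w : Equiv.Perm (Fin n)) (i : ℕ) :
    (word n w).getD i 0 = ol n w i := by
  unfold word ol
  by_cases h : i < n
  · rw [dif_pos h, List.getD_eq_getElem _ _ (by simpa using h)]
    simp
  · rw [dif_neg h, List.getD_eq_default]
    simpa using Nat.not_lt.1 h

open List in
lemma word_nodup (n : ℕ) (w : Equiv.Perm (Fin n)) : (word n w).Nodup := by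
  rw [word, List.nodup_ofFn]
  exact fun a b hab => w.injective (Fin.val_injective hab)

lemma des_eq (n : ℕ) (w : Equiv.Perm (Fin n)) : des n w = ldesL (word n w) := by
  rw [ldesL_eq_card, word_length]
  unfold des DesSet
  congr 1
  refine Finset.filter_congr fun i _ => ?_
  rw [word_getD, word_getD]

lemma isPeak_iff (n : ℕ) (w : Equiv.Perm (Fin n)) (j : ℕ) (hj : j < n) :
    IsPeak n w (j + 1) ↔ (0 < j ∧ j + 1 < n ∧ ol n w (j - 1) < ol n w j ∧
      ol n w (j + 1) < ol n w j) := by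
  have holb1 : olb n w (j + 1) = ((ol n w j : ℕ) : ℕ∞) := by
    rw [olb, dif_pos ⟨by omega, by omega⟩, ol, dif_pos (by omega : j < n)]
    simp
  rcases Nat.eq_zero_or_pos j with rfl | hjpos
  · have holb0 : olb n w (0 + 1 - 1) = ⊤ := by rw [olb, dif_neg (by omega)]
    rw [IsPeak, holb0]
    simp only [not_top_lt, false_and, Nat.lt_irrefl, iff_false]
  · have holbj : olb n w (j + 1 - 1) = ((ol n w (j - 1) : ℕ) : ℕ∞) := by
      rw [show j + 1 - 1 = j from rfl, olb, dif_pos ⟨by omega, by omega⟩, ol,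
        dif_pos (by omega : j - 1 < n)]
    rw [IsPeak, holbj, holb1]
    by_cases h2 : j + 1 < n
    · have holb2 : olb n w (j + 1 + 1) = ((ol n w (j + 1) : ℕ) : ℕ∞) := by
        rw [olb, dif_pos ⟨by omega, by omega⟩, ol, dif_pos (by omega : j + 1 < n)]
        simp
      rw [holb2]
      simp only [Nat.cast_lt]
      constructor
      · rintro ⟨ha, hb⟩; exact ⟨hjpos, h2, ha, hb⟩
      · rintro ⟨-, -, ha, hb⟩; exact ⟨ha, hb⟩
    · have holb2 : olb n w (j + 1 + 1) = ⊤ := by rw [olb, dif_neg (by omega)]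
      rw [holb2]
      simp [not_top_lt, h2]

lemma pk_eq (n : ℕ) (w : Equiv.Perm (Fin n)) : pk n w = lpkL (word n w) := by
  rw [lpkL_eq_card, word_length]
  unfold pk
  have hmap : Finset.Icc 1 n = (Finset.range n).map ⟨fun j => j + 1, add_left_injective 1⟩ := by
    ext a
    simp only [Finset.mem_map, Finset.mem_range, Finset.mem_Icc, Function.Embedding.coeFn_mk]
    constructor
    · rintro ⟨h1, h2⟩
      exact ⟨a - 1, by omega, show a - 1 + 1 = a by omega⟩
    · rintro ⟨b, hb, h⟩
      have : b + 1 = a := h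
      omega
  rw [hmap, Finset.filter_map, Finset.card_map]
  congr 1
  refine Finset.filter_congr fun j hj => ?_
  simp only [Finset.mem_range] at hj
  simp only [Function.comp_apply, Function.Embedding.coeFn_mk]
  rw [isPeak_iff n w j hj]
  simp only [word_getD]

open List in
lemma word_injective (n : ℕ) : Function.Injective (word n) := by
  intro a b h
  have hfn : (fun i => ((a i : Fin n) : ℕ)) = fun i => ((b i : Fin n) : ℕ) :=
    List.ofFn_injective h
  refine Equiv.ext fun i => ?_
  exact Fin.val_injective (congrFun hfn i)

open List in
lemma exists_word_of_perm (n : ℕ) (w : Equiv.Perm (Fin n)) (x : List ℕ)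
    (h : x.Perm (word n w)) : ∃ u : Equiv.Perm (Fin n), word n u = x := by
  have hlen : x.length = n := by rw [h.length_eq, word_length]
  have hmem : ∀ v ∈ x, v < n := by
    intro v hv
    have : v ∈ word n w := h.subset hv
    rw [word, List.mem_ofFn] at this
    obtain ⟨i, rfl⟩ := this
    exact (w i).isLt
  have hnd : x.Nodup := h.nodup_iff.2 (word_nodup n w)
  set f : Fin n → Fin n :=
    fun i => ⟨x[(i : ℕ)]'(by omega), hmem _ (List.getElem_mem _)⟩ with hf
  have hinj : Function.Injective f := by
    intro i j hij
    have h1 : x[(i : ℕ)]'(by omega) = x[(j : ℕ)]'(by omega) := by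
      simpa [hf] using congrArg Fin.val hij
    have := (List.Nodup.getElem_inj_iff hnd).1 h1
    exact Fin.val_injective this
  have hbij : Function.Bijective f := (Fintype.bijective_iff_injective_and_card f).2 ⟨hinj, rfl⟩
  refine ⟨Equiv.ofBijective f hbij, ?_⟩
  apply List.ext_getElem (by rw [word_length, hlen])
  intro i h1 h2
  simp only [word, List.getElem_ofFn]
  rfl

lemma hopEquiv_iff_hopE (n : ℕ) (a b : Equiv.Perm (Fin n)) :
    hopEquiv n a b ↔ hopE (word n a) (word n b) := by
  constructor
  · intro h
    induction h with
    | rel x y hxy => exact .rel _ _ hxy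
    | refl x => exact .refl _
    | symm x y _ ih => exact .symm _ _ ih
    | trans x y z _ _ ih1 ih2 => exact .trans _ _ _ ih1 ih2
  · intro h
    have key : ∀ x y : List ℕ, hopE x y → ∀ a b : Equiv.Perm (Fin n),
        word n a = x → word n b = y → hopEquiv n a b := by
      intro x y hxy
      induction hxy with
      | rel u v huv =>
        intro a b ha hb
        exact Relation.EqvGen.rel a b (by rw [ha, hb]; exact huv)
      | refl u =>
        intro a b ha hb
        have : a = b := word_injective n (ha.trans hb.symm)
        exact this ▸ Relation.EqvGen.refl a
      | symm u v huv ih =>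
        intro a b ha hb
        exact Relation.EqvGen.symm _ _ (ih b a hb ha)
      | trans u v t huv hvt ih1 ih2 =>
        intro a c ha hc
        have hperm : v.Perm (word n a) := by rw [ha]; exact (hopE_perm huv).symm
        obtain ⟨b, hb⟩ := exists_word_of_perm n a v hperm
        exact Relation.EqvGen.trans _ _ _ (ih1 a b ha hb) (ih2 b c hb hc)
    exact key _ _ h a b rfl rfl

theorem hop_class_sum (n : ℕ) (w : Equiv.Perm (Fin n)) :
    ∑ u ∈ Finset.univ.filter (fun u => hopEquiv n w u),
        (X : Polynomial ℕ) ^ des n u =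
      (X : Polynomial ℕ) ^ pk n w * (1 + X) ^ (n - 1 - 2 * pk n w) := by
  have hnd := word_nodup n w
  have hmain := hop_sum_list (word n w) hnd
  rw [word_length] at hmain
  rw [pk_eq, ← hmain]
  refine Finset.sum_bij (fun u _ => word n u) ?_ ?_ ?_ ?_
  · intro a ha
    rw [mem_hopFinset]
    exact (hopEquiv_iff_hopE n w a).1 ((Finset.mem_filter.1 ha).2)
  · intro a ha b hb h
    exact word_injective n h
  · intro x hx
    have h := mem_hopFinset.1 hx
    obtain ⟨u, hu⟩ := exists_word_of_perm n w x (hopE_perm h).symm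
    exact ⟨u, Finset.mem_filter.2 ⟨Finset.mem_univ _,
      (hopEquiv_iff_hopE n w u).2 (hu ▸ h)⟩, hu⟩
  · intro a ha
    rw [des_eq]
end
end

section
/- Each hop equivalence class in S_n under valley hopping contains exactly one permutation with no double descent and no initial descent (the canonical representative obtained by placing all free letters on upslopes); consequently S_n is the disjoint union of the classes Hop(w) over w ∈ S̃_n. -/
open Finset Polynomial

open scoped Classical

noncomputable section

namespace HopAux

/-- inversion count of a list -/
def linv : List ℕ → ℕ
  | [] => 0
  | a :: l => l.countP (fun x => decide (x < a)) + linv l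

lemma linv_nil : linv [] = 0 := rfl
lemma linv_cons (a : ℕ) (l : List ℕ) :
    linv (a :: l) = l.countP (fun x => decide (x < a)) + linv l := rfl

lemma linv_append (P Q : List ℕ) :
    linv (P ++ Q) = linv P + linv Q +
      (P.map (fun a => Q.countP (fun x => decide (x < a)))).sum := by
  induction P with
  | nil => simp [linv_nil]
  | cons a P ih =>
      simp only [List.cons_append, linv_cons, List.countP_append, ih, List.map_cons,
        List.sum_cons]
      ring

lemma hopStep_linv {v u : List ℕ} (h : hopStep v u) : linv u < linv v := by
  obtain ⟨A, B, C, j, hBne, hBlt, _, _, rfl, rfl⟩ := h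
  have hsum : ((A.map fun a => ((j :: (B ++ C)).countP fun x => decide (x < a))).sum)
      = ((A.map fun a => ((B ++ j :: C).countP fun x => decide (x < a))).sum) := by
    congr 1
    exact List.map_congr_left fun a _ => ((List.perm_middle).countP_eq _).symm
  have h1 : ∀ b ∈ B, ((j :: C).countP fun x => decide (x < b))
      = (C.countP fun x => decide (x < b)) := by
    intro b hb
    have hb' : ¬ (j < b) := by have := hBlt b hb; omega
    simp [List.countP_cons, hb']
  have h2 : (B.countP fun x => decide (x < j)) = B.length :=
    List.countP_eq_length.mpr (fun b hb => by simpa using hBlt b hb)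
  have e1 : linv (j :: (B ++ C)) = B.length + (C.countP fun x => decide (x < j))
      + linv (B ++ C) := by
    rw [linv_cons, List.countP_append, h2]
  have e2 : linv (B ++ C) = linv B + linv C +
      (B.map fun b => C.countP fun x => decide (x < b)).sum := linv_append _ _
  have e3 : linv (B ++ j :: C) = linv B + ((C.countP fun x => decide (x < j)) + linv C)
      + (B.map fun b => C.countP fun x => decide (x < b)).sum := by
    rw [linv_append, linv_cons, List.map_congr_left h1]
  have hpos : 0 < B.length := List.length_pos_iff.mpr hBne
  have eL := linv_append A (B ++ j :: C)
  have eR := linv_append A (j :: (B ++ C))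
  rw [eL, eR, hsum]
  omega


lemma word_length (n : ℕ) (w : Equiv.Perm (Fin n)) : (word n w).length = n := by
  simp [word]

lemma word_nodup (n : ℕ) (w : Equiv.Perm (Fin n)) : (word n w).Nodup := by
  rw [word, List.nodup_ofFn]
  exact fun i i' h => w.injective (Fin.val_injective h)

lemma word_getElem (n : ℕ) (w : Equiv.Perm (Fin n)) (i : ℕ) (h : i < n) :
    (word n w)[i]'(by simpa [word_length] using h) = (w ⟨i, h⟩ : ℕ) := by
  simp [word]

lemma ol_eq_getElem (n : ℕ) (w : Equiv.Perm (Fin n)) {i : ℕ} (h : i < n) :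
    ol n w i = (word n w)[i]'(by simpa [word_length] using h) := by
  rw [word_getElem n w i h, ol, dif_pos h]

lemma word_injective {n : ℕ} {x y : Equiv.Perm (Fin n)} (h : word n x = word n y) : x = y := by
  rw [word, word, List.ofFn_inj] at h
  exact Equiv.ext fun i => Fin.val_injective (congrFun h i)

lemma hopStep_perm {v u : List ℕ} (h : hopStep v u) : v.Perm u := by
  obtain ⟨A, B, C, j, _, _, _, _, rfl, rfl⟩ := h
  exact (List.perm_middle.symm).append_left A

lemma exists_perm_word {n : ℕ} {x : Equiv.Perm (Fin n)} {u : List ℕ}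
    (hp : (word n x).Perm u) : ∃ y : Equiv.Perm (Fin n), word n y = u := by
  have hlen : u.length = n := by rw [← hp.length_eq, word_length]
  have hnd : u.Nodup := hp.nodup_iff.mp (word_nodup n x)
  have hmem : ∀ a ∈ u, a < n := by
    intro a ha
    have : a ∈ word n x := hp.mem_iff.mpr ha
    rw [word, List.mem_ofFn] at this
    obtain ⟨i, rfl⟩ := this
    exact (x i).isLt
  have hlt : ∀ i : Fin n, (i : ℕ) < u.length := fun i => by rw [hlen]; exact i.isLt
  set g : Fin n → Fin n := fun i => ⟨u[(i : ℕ)]'(hlt i),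
    hmem _ (List.getElem_mem _)⟩ with hg
  have hginj : Function.Injective g := by
    intro i i' h
    have h2 : u.get ⟨(i : ℕ), hlt i⟩ = u.get ⟨(i' : ℕ), hlt i'⟩ :=
      congrArg Fin.val h
    have h3 := List.nodup_iff_injective_get.mp hnd h2
    exact Fin.ext (by simpa using congrArg Fin.val h3)
  refine ⟨Equiv.ofBijective g ((Fintype.bijective_iff_injective_and_card g).mpr
    ⟨hginj, rfl⟩), ?_⟩
  apply List.ext_getElem (by rw [word_length, hlen])
  intro i h1 h2
  rw [word_getElem n _ i (by rwa [word_length] at h1)]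
  simp [Equiv.ofBijective, hg, List.get_eq_getElem]


lemma hopStep_intro' {v u : List ℕ} (A B C : List ℕ) (j : ℕ) (hBne : B ≠ [])
    (hBlt : ∀ x ∈ B, x < j) (hA : ∀ x ∈ A.getLast?, j < x)
    (hC : ∀ x ∈ C.head?, j < x)
    (hv : v = A ++ j :: (B ++ C)) (hu : u = A ++ (B ++ j :: C)) : hopStep v u :=
  ⟨A, B, C, j, hBne, hBlt, hA, hC, hv, hu⟩

lemma exists_redex {n : ℕ} (w : Equiv.Perm (Fin n)) (p : ℕ) (hp : p + 1 < n)
    (hdesc : ol n w (p + 1) < ol n w p)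
    (hleft : p = 0 ∨ ol n w p < ol n w (p - 1)) :
    ∃ u', hopStep (word n w) u' := by
  have hlen : (word n w).length = n := word_length n w
  have hnd : (word n w).Nodup := word_nodup n w
  have hpn : p < n := by omega
  refine ⟨(word n w).take p ++
      ((((word n w).drop (p+1)).takeWhile (fun x => decide (x < ol n w p))) ++
        ol n w p :: (((word n w).drop (p+1)).dropWhile (fun x => decide (x < ol n w p)))),
    hopStep_intro' _ _ _ _ ?_ ?_ ?_ ?_ ?_ rfl⟩
  · -- B ≠ []
    have h1 : (word n w).drop (p+1) =
        (word n w)[p+1]'(by omega) :: (word n w).drop (p+2) :=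
      List.drop_eq_getElem_cons (by omega)
    rw [h1, List.takeWhile_cons_of_pos (by
      have := ol_eq_getElem n w hp
      have h0 := ol_eq_getElem n w hpn
      simp only [decide_eq_true_eq]
      omega)]
    simp
  · intro x hx
    simpa using List.mem_takeWhile_imp hx
  · intro x hx
    rcases hleft with h0 | hlt
    · subst h0; simp at hx
    · have hp0 : p ≠ 0 := by
        intro h; subst h; simp at hx
      have hq : p - 1 < n := by omega
      have htake : (word n w).take p =
          (word n w).take (p-1) ++ [(word n w)[p-1]'(by omega)] := by
        conv_lhs => rw [show p = (p-1)+1 by omega]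
        rw [List.take_succ, List.getElem?_eq_getElem (by omega)]
        rfl
      rw [htake, List.getLast?_append_of_ne_nil _ (by simp)] at hx
      simp only [List.getLast?_singleton, Option.mem_some_iff] at hx
      have e1 := ol_eq_getElem n w hpn
      have e2 := ol_eq_getElem n w hq
      omega
  · intro x hx
    have hDne : ((word n w).drop (p+1)).dropWhile (fun x => decide (x < ol n w p)) ≠ [] := by
      intro h; rw [h] at hx; simp at hx
    have hhead := List.head_dropWhile_not (fun x => decide (x < ol n w p))
      hDne
    have hxeq : (((word n w).drop (p+1)).dropWhile
        (fun x => decide (x < ol n w p))).head hDne = x := by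
      rw [List.head?_eq_head hDne] at hx
      simpa using hx
    have hge : ¬ x < ol n w p := by
      rw [← hxeq]; simpa using hhead
    have hxD : x ∈ ((word n w).drop (p+1)).dropWhile (fun x => decide (x < ol n w p)) :=
      hxeq ▸ List.head_mem hDne
    have hxR : x ∈ (word n w).drop (p+1) := List.dropWhile_subset _ hxD
    obtain ⟨k, hk, hkx⟩ := List.getElem_of_mem hxR
    rw [List.getElem_drop] at hkx
    have hkn : p + 1 + k < n := by
      rw [List.length_drop, hlen] at hk; omega
    have hne : x ≠ ol n w p := by
      rw [← hkx, ol_eq_getElem n w hpn]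
      intro h
      have := (List.Nodup.getElem_inj_iff hnd).mp h
      omega
    omega
  · rw [List.takeWhile_append_dropWhile]
    have h2 : (word n w).drop p = ol n w p :: (word n w).drop (p+1) := by
      rw [List.drop_eq_getElem_cons (by omega), ol_eq_getElem n w hpn]
    rw [← h2]
    exact (List.take_append_drop p (word n w)).symm


lemma mem_DesSet {n : ℕ} {u : Equiv.Perm (Fin n)} {i : ℕ} :
    i ∈ DesSet n u ↔ i < n - 1 ∧ ol n u (i + 1) < ol n u i := by
  simp [DesSet]

lemma not_canonical_of_redex {n : ℕ} {u : Equiv.Perm (Fin n)} {u' : List ℕ}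
    (h : hopStep (word n u) u') :
    ¬ (NoDoubleDescent n u ∧ NoInitialDescent n u) := by
  obtain ⟨A, B, C, j, hBne, hBlt, hA, hC, hv, _⟩ := h
  obtain ⟨b, B', rfl⟩ := List.exists_cons_of_ne_nil hBne
  have hlen : (word n u).length = n := word_length n u
  have hlen2 : n = A.length + (1 + (1 + (B'.length + C.length))) := by
    rw [← hlen, hv]; simp [List.length_append]; omega
  have hpn : A.length + 1 < n := by omega
  have hvp : ol n u A.length = j := by
    rw [ol_eq_getElem n u (show A.length < n by omega), List.getElem_of_eq hv,
      List.getElem_append_right (le_refl A.length)]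
    simp
  have hvp1 : ol n u (A.length + 1) = b := by
    rw [ol_eq_getElem n u hpn, List.getElem_of_eq hv,
      List.getElem_append_right (by omega : A.length ≤ A.length + 1)]
    simp
  have hdes : A.length ∈ DesSet n u := by
    rw [mem_DesSet]
    refine ⟨by omega, ?_⟩
    rw [hvp, hvp1]
    exact hBlt b (by simp)
  rintro ⟨hDD, hID⟩
  rcases List.eq_nil_or_concat A with rfl | ⟨A', a, rfl⟩
  · exact hID (by simpa using hdes)
  · simp only [List.concat_eq_append] at hv hA hvp hvp1 hdes hlen2 hpn
    have hAlen : A'.length + 1 = (A' ++ [a]).length := by simp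
    have hc : (A' ++ [a]).length = A'.length + 1 := by simp
    have hvpm : ol n u A'.length = a := by
      rw [ol_eq_getElem n u (show A'.length < n by omega), List.getElem_of_eq hv,
        List.getElem_append_left (by simp : A'.length < (A' ++ [a]).length),
        List.getElem_append_right (le_refl A'.length)]
      simp
    have hja : j < a := by
      apply hA
      rw [List.getLast?_append_of_ne_nil _ (by simp : [a] ≠ [])]
      simp
    have hdes2 : A'.length ∈ DesSet n u := by
      rw [mem_DesSet]
      refine ⟨by omega, ?_⟩
      rw [hvpm, show A'.length + 1 = (A' ++ [a]).length by simp, hvp]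
      exact hja
    exact hDD A'.length hdes2 (by rw [hAlen]; exact hdes)


lemma headlast_contra {A B : List ℕ} {j j' : ℕ} (hBne : B ≠ [])
    (hBlt : ∀ x ∈ B, x < j) (hjj' : j < j')
    (hA' : ∀ x ∈ (A ++ j :: B).getLast?, j' < x) : False := by
  have hy1 : (A ++ j :: B).getLast? = some (B.getLast hBne) := by
    rw [show A ++ j :: B = (A ++ [j]) ++ B by simp,
      List.getLast?_append_of_ne_nil _ hBne, List.getLast?_eq_getLast hBne]
  have h1 := hA' _ hy1
  have h2 := hBlt _ (List.getLast_mem hBne)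
  omega

lemma overlap_case {A E B' G C : List ℕ} {j j' : ℕ}
    (hBlt : ∀ x ∈ E ++ j' :: (B' ++ G), x < j)
    (hA : ∀ x ∈ A.getLast?, j < x) (hC : ∀ x ∈ C.head?, j < x)
    (hBne' : B' ≠ []) (hBlt' : ∀ x ∈ B', x < j')
    (hA' : ∀ x ∈ (A ++ j :: E).getLast?, j' < x)
    (hC' : ∀ x ∈ (G ++ C).head?, j' < x) :
    ∃ z, hopStep (A ++ ((E ++ j' :: (B' ++ G)) ++ j :: C)) z ∧
      hopStep ((A ++ j :: E) ++ (B' ++ j' :: (G ++ C))) z := by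
  have hj' : j' < j := hBlt j' (by simp)
  refine ⟨(A ++ E) ++ (B' ++ j' :: (G ++ j :: C)),
    hopStep_intro' (A ++ E) B' (G ++ j :: C) j' hBne' hBlt' ?_ ?_ (by simp) (by simp),
    hopStep_intro' A (E ++ (B' ++ j' :: G)) C j (by simp) ?_ hA hC (by simp) (by simp)⟩
  · intro x hx
    cases E with
    | nil =>
      simp only [List.append_nil] at hx
      exact lt_trans hj' (hA x hx)
    | cons e E0 =>
      apply hA' x
      rw [List.getLast?_append_of_ne_nil _ (by simp : e :: E0 ≠ [])] at hx
      rw [List.getLast?_append_of_ne_nil _ (by simp : j :: (e :: E0) ≠ []),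
        List.getLast?_cons_cons]
      exact hx
  · intro x hx
    cases G with
    | nil =>
      have : j = x := by simpa using hx
      omega
    | cons g G0 =>
      have hxg : g = x := by simpa using hx
      rcases hxg with rfl
      exact hC' g (by simp)
  · intro x hx
    apply hBlt
    simp only [List.mem_append, List.mem_cons] at hx ⊢
    tauto

lemma conf_core {A B C : List ℕ} {j : ℕ} {A' B' C' : List ℕ} {j' : ℕ}
    (hBne : B ≠ []) (hBlt : ∀ x ∈ B, x < j)
    (hA : ∀ x ∈ A.getLast?, j < x) (hC : ∀ x ∈ C.head?, j < x)
    (hBne' : B' ≠ []) (hBlt' : ∀ x ∈ B', x < j')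
    (hA' : ∀ x ∈ A'.getLast?, j' < x) (hC' : ∀ x ∈ C'.head?, j' < x)
    (heq : A ++ j :: (B ++ C) = A' ++ j' :: (B' ++ C'))
    (hlen : A.length ≤ A'.length) :
    A ++ (B ++ j :: C) = A' ++ (B' ++ j' :: C') ∨
      ∃ z, hopStep (A ++ (B ++ j :: C)) z ∧ hopStep (A' ++ (B' ++ j' :: C')) z := by
  obtain ⟨e, hA'e, he⟩ : ∃ e, A' = A ++ e ∧ j :: (B ++ C) = e ++ j' :: (B' ++ C') := by
    rcases List.append_eq_append_iff.mp heq with ⟨e, h1, h2⟩ | ⟨e, h1, h2⟩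
    · exact ⟨e, h1, h2⟩
    · have he0 : e = [] := by
        have hl := congrArg List.length h1
        simp only [List.length_append] at hl
        exact List.length_eq_zero_iff.mp (by omega)
      subst he0
      refine ⟨[], by simpa using h1.symm, by simpa using h2.symm⟩
  subst hA'e
  cases e with
  | nil =>
    simp only [List.nil_append] at he
    injection he with h1 h2
    subst h1
    rcases List.append_eq_append_iff.mp h2 with ⟨d, hd1, hd2⟩ | ⟨d, hd1, hd2⟩
    · cases d with
      | nil =>
        left
        simp only [List.append_nil] at hd1
        simp only [List.nil_append] at hd2
        rw [hd1, hd2]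
        simp
      | cons c d' =>
        exfalso
        have h1 : j < c := hC c (by rw [hd2]; simp)
        have h2 : c < j := hBlt' c (by rw [hd1]; simp)
        omega
    · cases d with
      | nil =>
        left
        simp only [List.append_nil] at hd1
        simp only [List.nil_append] at hd2
        rw [hd1, hd2]
        simp
      | cons c d' =>
        exfalso
        have h1 : j < c := hC' c (by rw [hd2]; simp)
        have h2 : c < j := hBlt c (by rw [hd1]; simp)
        omega
  | cons j0 E =>
    rw [List.cons_append] at he
    injection he with h1 h2
    subst h1
    rcases List.append_eq_append_iff.mp h2 with ⟨D, hD1, hD2⟩ | ⟨D, hD1, hD2⟩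
    · -- E = B ++ D, C = D ++ (j' :: (B' ++ C'))
      cases D with
      | nil =>
        exfalso
        simp only [List.append_nil] at hD1
        simp only [List.nil_append] at hD2
        subst hD1
        have hjj' : j < j' := hC j' (by rw [hD2]; simp)
        exact headlast_contra hBne hBlt hjj' hA'
      | cons c D' =>
        right
        have hjc : j < c := hC c (by rw [hD2]; simp)
        subst hD1
        subst hD2
        refine ⟨(A ++ B ++ j :: c :: D') ++ (B' ++ j' :: C'),
          hopStep_intro' (A ++ B ++ j :: c :: D') B' C' j' hBne' hBlt' ?_ hC'
            (by simp) (by simp),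
          hopStep_intro' A B (c :: (D' ++ (B' ++ j' :: C'))) j hBne hBlt hA ?_
            (by simp) (by simp)⟩
        · intro x hx
          apply hA' x
          rw [show A ++ B ++ j :: c :: D' = (A ++ B ++ [j]) ++ (c :: D') by simp,
            List.getLast?_append_of_ne_nil _ (by simp : c :: D' ≠ [])] at hx
          rw [show A ++ j :: (B ++ c :: D') = (A ++ j :: B) ++ (c :: D') by simp,
            List.getLast?_append_of_ne_nil _ (by simp : c :: D' ≠ [])]
          exact hx
        · intro x hx
          have : c = x := by simpa using hx
          omega
    · -- B = E ++ D, D ++ C = j' :: (B' ++ C')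
      cases D with
      | nil =>
        exfalso
        simp only [List.append_nil] at hD1
        simp only [List.nil_append] at hD2
        subst hD1
        have hjj' : j < j' := hC j' (by rw [← hD2]; simp)
        exact headlast_contra hBne hBlt hjj' hA'
      | cons c F =>
        have hD2' := hD2.symm
        rw [List.cons_append] at hD2'
        injection hD2' with h3 h4
        subst h3
        have hj'j : c < j := hBlt c (by rw [hD1]; simp)
        have key : ∃ G, F = B' ++ G ∧ C' = G ++ C := by
          rcases List.append_eq_append_iff.mp h4.symm with ⟨G, hG1, hG2⟩ | ⟨G, hG1, hG2⟩
          · exact ⟨G, hG1, hG2⟩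
          · cases G with
            | nil =>
              simp only [List.append_nil] at hG1
              simp only [List.nil_append] at hG2
              exact ⟨[], by simp [hG1.symm], by simp [hG2.symm]⟩
            | cons g G0 =>
              exfalso
              have h5 : j < g := hC g (by rw [hG2]; simp)
              have h6 : g < c := hBlt' g (by rw [hG1]; simp)
              omega
        obtain ⟨G, rfl, rfl⟩ := key
        subst hD1
        exact Or.inr (overlap_case hBlt hA hC hBne' hBlt' hA' hC')

lemma hopStep_strong_conf {v u₁ u₂ : List ℕ} (h₁ : hopStep v u₁) (h₂ : hopStep v u₂) :
    u₁ = u₂ ∨ ∃ z, hopStep u₁ z ∧ hopStep u₂ z := by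
  obtain ⟨A, B, C, j, hBne, hBlt, hA, hC, hv1, rfl⟩ := h₁
  obtain ⟨A', B', C', j', hBne', hBlt', hA', hC', hv2, rfl⟩ := h₂
  rcases le_total A.length A'.length with h | h
  · exact conf_core hBne hBlt hA hC hBne' hBlt' hA' hC' (hv1.symm.trans hv2) h
  · rcases conf_core hBne' hBlt' hA' hC' hBne hBlt hA hC (hv2.symm.trans hv1) h with
      h' | ⟨z, hz1, hz2⟩
    · exact Or.inl h'.symm
    · exact Or.inr ⟨z, hz2, hz1⟩


def Rp (n : ℕ) : Equiv.Perm (Fin n) → Equiv.Perm (Fin n) → Prop :=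
  fun x y => hopStep (word n x) (word n y)

lemma Rp_sc {n : ℕ} : ∀ a b c : Equiv.Perm (Fin n), Rp n a b → Rp n a c →
    ∃ d, Relation.ReflGen (Rp n) b d ∧ Relation.ReflTransGen (Rp n) c d := by
  intro a b c hab hac
  rcases hopStep_strong_conf hab hac with h | ⟨z, hz1, hz2⟩
  · obtain rfl : b = c := word_injective h
    exact ⟨b, Relation.ReflGen.refl, Relation.ReflTransGen.refl⟩
  · obtain ⟨d, hd⟩ := exists_perm_word (hopStep_perm hz1)
    refine ⟨d, Relation.ReflGen.single ?_, Relation.ReflTransGen.single ?_⟩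
    · show hopStep (word n b) (word n d)
      rw [hd]; exact hz1
    · show hopStep (word n c) (word n d)
      rw [hd]; exact hz2

lemma canonical_rtg_eq {n : ℕ} {u d : Equiv.Perm (Fin n)}
    (hc : NoDoubleDescent n u ∧ NoInitialDescent n u)
    (h : Relation.ReflTransGen (Rp n) u d) : u = d := by
  rcases Relation.ReflTransGen.cases_head h with rfl | ⟨c, hc', _⟩
  · rfl
  · exact absurd hc (not_canonical_of_redex hc')

lemma step_of_not_canonical {n : ℕ} (w : Equiv.Perm (Fin n))
    (h : ¬ (NoDoubleDescent n w ∧ NoInitialDescent n w)) :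
    ∃ u', hopStep (word n w) u' := by
  by_cases hDD : NoDoubleDescent n w
  · have hID : ¬ NoInitialDescent n w := fun h2 => h ⟨hDD, h2⟩
    rw [NoInitialDescent] at hID
    push_neg at hID
    rw [mem_DesSet] at hID
    exact exists_redex w 0 (by omega) hID.2 (Or.inl rfl)
  · rw [NoDoubleDescent] at hDD
    push_neg at hDD
    obtain ⟨i, hi, hi1⟩ := hDD
    rw [mem_DesSet] at hi hi1
    exact exists_redex w (i+1) (by omega) hi1.2 (Or.inr (by simpa using hi.2))

lemma exists_canonical (n : ℕ) (w : Equiv.Perm (Fin n)) :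
    ∃ u, hopEquiv n w u ∧ NoDoubleDescent n u ∧ NoInitialDescent n u := by
  have H : ∀ (m : ℕ) (w : Equiv.Perm (Fin n)), linv (word n w) ≤ m →
      ∃ u, hopEquiv n w u ∧ NoDoubleDescent n u ∧ NoInitialDescent n u := by
    intro m
    induction m with
    | zero =>
      intro w hw
      by_cases hc : NoDoubleDescent n w ∧ NoInitialDescent n w
      · exact ⟨w, Relation.EqvGen.refl w, hc⟩
      · obtain ⟨u', hu'⟩ := step_of_not_canonical w hc
        have := hopStep_linv hu'
        omega
    | succ m ih =>
      intro w hw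
      by_cases hc : NoDoubleDescent n w ∧ NoInitialDescent n w
      · exact ⟨w, Relation.EqvGen.refl w, hc⟩
      · obtain ⟨u', hu'⟩ := step_of_not_canonical w hc
        obtain ⟨y, hy⟩ := exists_perm_word (hopStep_perm hu')
        have hstep : hopStep (word n w) (word n y) := by rw [hy]; exact hu'
        have hlt : linv (word n y) ≤ m := by
          have := hopStep_linv hstep; omega
        obtain ⟨u, hu, hcu⟩ := ih y hlt
        exact ⟨u, Relation.EqvGen.trans _ _ _ (Relation.EqvGen.rel _ _ hstep) hu, hcu⟩
  exact H (linv (word n w)) w le_rfl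

end HopAux
lemma eqvGen_join_aux {α : Type*} {r : α → α → Prop}
    (hsc : ∀ a b c, r a b → r a c →
      ∃ d, Relation.ReflGen r b d ∧ Relation.ReflTransGen r c d)
    {a b : α} (h : Relation.EqvGen r a b) :
    Relation.Join (Relation.ReflTransGen r) a b := by
  have hequiv := Relation.equivalence_join_reflTransGen hsc
  induction h with
  | rel a b h => exact ⟨b, Relation.ReflTransGen.single h, Relation.ReflTransGen.refl⟩
  | refl a => exact hequiv.refl a
  | symm a b h ih => exact hequiv.symm ih
  | trans a b c h1 h2 ih1 ih2 => exact hequiv.trans ih1 ih2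

theorem hop_class_unique_canonical (n : ℕ) (w : Equiv.Perm (Fin n)) :
    ∃! u : Equiv.Perm (Fin n),
      hopEquiv n w u ∧ NoDoubleDescent n u ∧ NoInitialDescent n u := by
  obtain ⟨u, hu, hcu⟩ := HopAux.exists_canonical n w
  refine ⟨u, ⟨hu, hcu⟩, ?_⟩
  rintro u' ⟨hu', hcu'⟩
  have hE : Relation.EqvGen (HopAux.Rp n) u' u :=
    Relation.EqvGen.trans _ _ _ (Relation.EqvGen.symm _ _ hu') hu
  obtain ⟨d, h1, h2⟩ := eqvGen_join_aux HopAux.Rp_sc hE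
  rw [HopAux.canonical_rtg_eq hcu' h1, HopAux.canonical_rtg_eq hcu h2]
end
end

section
/- For K ⊆ [n-1], let K* = { n−k : k ∈ K }. The map v ↦ v*, with v*(i) = n+1−v(n+1−i), is a des-preserving bijection in the following sense: Σ_{v ∈ W(K)} t^{des(v)} = Σ_{v ∈ W(K*)} t^{des(v)}. -/
open Finset Polynomial

open scoped Classical

noncomputable section

lemma starPerm_apply (n : ℕ) (w : Equiv.Perm (Fin n)) (x : Fin n) :
    starPerm n w x = (w x.rev).rev := rfl

lemma starPerm_inv (n : ℕ) (w : Equiv.Perm (Fin n)) :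
    (starPerm n w)⁻¹ = starPerm n w⁻¹ := by
  ext x
  simp [starPerm, Equiv.Perm.inv_def, Equiv.symm_trans_apply]

lemma starPerm_starPerm (n : ℕ) (w : Equiv.Perm (Fin n)) :
    starPerm n (starPerm n w) = w := by
  ext x
  simp [starPerm_apply]

lemma ol_star (n : ℕ) (w : Equiv.Perm (Fin n)) (i : ℕ) (h : i < n) :
    ol n (starPerm n w) i = n - 1 - ol n w (n - 1 - i) := by
  have h2 : n - 1 - i < n := by omega
  simp only [ol, dif_pos h, dif_pos h2, starPerm_apply, Fin.val_rev]
  have hr : (⟨i, h⟩ : Fin n).rev = ⟨n - 1 - i, h2⟩ := by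
    apply Fin.ext; simp [Fin.val_rev]; omega
  rw [hr]
  have := (w ⟨n - 1 - i, h2⟩).is_lt
  omega

lemma mem_DesSet_star (n : ℕ) (w : Equiv.Perm (Fin n)) (i : ℕ) (hi : i < n - 1) :
    i ∈ DesSet n (starPerm n w) ↔ n - 2 - i ∈ DesSet n w := by
  have h1 : i < n := by omega
  have h2 : i + 1 < n := by omega
  have e1 : n - 1 - (i + 1) = n - 2 - i := by omega
  have e2 : n - 1 - i = (n - 2 - i) + 1 := by omega
  have bw : ∀ j : ℕ, j < n → ol n w j ≤ n - 1 := by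
    intro j hj
    simp only [ol, dif_pos hj]
    omega
  simp only [DesSet, mem_filter, mem_range]
  rw [ol_star n w _ h2, ol_star n w _ h1, e1, e2]
  have b1 := bw (n - 2 - i) (by omega)
  have b2 := bw ((n - 2 - i) + 1) (by omega)
  constructor
  · rintro ⟨-, h⟩; exact ⟨by omega, by omega⟩
  · rintro ⟨-, h⟩; exact ⟨hi, by omega⟩

lemma des_star (n : ℕ) (w : Equiv.Perm (Fin n)) : des n (starPerm n w) = des n w := by
  unfold des
  apply Finset.card_nbij' (fun i => n - 2 - i) (fun i => n - 2 - i)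
  · intro a ha
    have ha' : a < n - 1 := by
      have := (mem_filter.mp ha).1; simpa [DesSet] using mem_range.mp (mem_filter.mp ha).1
    exact (mem_DesSet_star n w a ha').mp ha
  · intro a ha
    have ha' : a < n - 1 := by
      have := (mem_filter.mp ha).1; simpa [DesSet] using mem_range.mp (mem_filter.mp ha).1
    have he : n - 2 - (n - 2 - a) = a := by omega
    show n - 2 - a ∈ DesSet n (starPerm n w)
    rw [mem_DesSet_star n w _ (by omega), he]
    exact ha
  · intro a ha
    have ha' : a < n - 1 := by
      simpa [DesSet] using mem_range.mp (mem_filter.mp ha).1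
    show n - 2 - (n - 2 - a) = a
    omega
  · intro a ha
    have ha' : a < n - 1 := by
      simpa [DesSet] using mem_range.mp (mem_filter.mp ha).1
    show n - 2 - (n - 2 - a) = a
    omega

lemma star_mem_Wset (n : ℕ) (K : Finset ℕ) (hK : ∀ k ∈ K, 1 ≤ k ∧ k ≤ n - 1)
    (v : Equiv.Perm (Fin n)) (hv : v ∈ Wset n K) :
    starPerm n v ∈ Wset n (K.image fun k => n - k) := by
  simp only [Wset, mem_filter, mem_univ, true_and] at hv ⊢
  intro k' hk' hklt
  obtain ⟨k, hk, rfl⟩ := Finset.mem_image.mp hk'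
  obtain ⟨hk1, hk2⟩ := hK k hk
  have hn : 1 ≤ n - 1 := by omega
  have hkn : k < n := by omega
  have hv' := hv k hk hkn
  rw [starPerm_inv]
  have r1 : (⟨n - k - 1, lt_of_le_of_lt (Nat.sub_le _ 1) hklt⟩ : Fin n).rev = ⟨k, hkn⟩ := by
    ext; simp [Fin.val_rev]; omega
  have r2 : (⟨n - k, hklt⟩ : Fin n).rev = ⟨k - 1, by omega⟩ := by
    ext; simp [Fin.val_rev]; omega
  rw [starPerm_apply, starPerm_apply, r1, r2]
  have b1 : ((v⁻¹ ⟨k, hkn⟩ : Fin n) : ℕ) < n := Fin.is_lt _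
  have b2 : ((v⁻¹ ⟨k - 1, by omega⟩ : Fin n) : ℕ) < n := Fin.is_lt _
  simp only [Fin.val_rev]
  omega

theorem Wset_star_sum (n : ℕ) (K : Finset ℕ)
    (hK : ∀ k ∈ K, 1 ≤ k ∧ k ≤ n - 1) :
    ∑ v ∈ Wset n K, (X : Polynomial ℕ) ^ des n v =
      ∑ v ∈ Wset n (K.image fun k => n - k), (X : Polynomial ℕ) ^ des n v := by
  have hK' : ∀ k ∈ K.image fun k => n - k, 1 ≤ k ∧ k ≤ n - 1 := by
    intro k' hk'
    obtain ⟨k, hk, rfl⟩ := Finset.mem_image.mp hk'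
    obtain ⟨h1, h2⟩ := hK k hk
    omega
  have himg : (K.image fun k => n - k).image (fun k => n - k) = K := by
    rw [Finset.image_image]
    rw [show ((fun k => n - k) ∘ fun k => n - k) = fun k => n - (n - k) from rfl]
    conv_rhs => rw [← Finset.image_id (s := K)]
    apply Finset.image_congr
    intro k hk
    obtain ⟨h1, h2⟩ := hK k hk
    simp; omega
  refine Finset.sum_nbij' (starPerm n) (starPerm n) ?_ ?_ ?_ ?_ ?_
  · exact star_mem_Wset n K hK
  · intro v hv
    have := star_mem_Wset n _ hK' v hv
    rwa [himg] at this
  · intro v _; exact starPerm_starPerm n v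
  · intro v _; exact starPerm_starPerm n v
  · intro v _; rw [des_star]
end
end
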